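/- arXiv:2209.11651 — 15 statements merged into one kernel-verified Lean document; each statement's English description precedes it below -/
import Mathlib

section
/- Let V be a finite vertex set, Σ a finite label alphabet, and E a finite index set of edges where each edge e has two distinct endpoints a_e, b_e ∈ V, equipped with nonnegative utility and cost functions u_e, c_e : Σ × Σ → ℝ≥0. For every fractional label assignment λ there exists an integral label assignment ℓ : V → Σ such that u(ℓ) − c(ℓ) ≥ u(λ) − c(λ). -/
open Finset

lemma two_point_prod {V : Type*} [Fintype V] [DecidableEq V] {p q : V} (hpq : p ≠ q)
    (X Y : ℝ) :
    ∏ v, (if v = p then X else if v = q then Y else 1) = X * Y := by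
  have h : ∀ v, (if v = p then X else if v = q then Y else 1)
      = (if v = p then X else 1) * (if v = q then Y else 1) := by
    intro v
    split_ifs with h1 h2 <;> simp_all
  rw [Finset.prod_congr rfl (fun v _ => h v), Finset.prod_mul_distrib,
    Finset.prod_ite_eq' univ p (fun _ => X), Finset.prod_ite_eq' univ q (fun _ => Y)]
  simp

lemma marginal {V S : Type*} [Fintype V] [Fintype S] [DecidableEq V] [DecidableEq S]
    (lam : V → S → ℝ) (hsum : ∀ v, ∑ α, lam v α = 1)
    {p q : V} (hpq : p ≠ q) (α β : S) :
    ∑ ℓ : V → S, (∏ v, lam v (ℓ v)) *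
      ((if ℓ p = α then (1:ℝ) else 0) * (if ℓ q = β then (1:ℝ) else 0))
      = lam p α * lam q β := by
  set h : V → S → ℝ := fun v s =>
    (if v = p then (if s = α then (1:ℝ) else 0)
      else if v = q then (if s = β then (1:ℝ) else 0) else 1) * lam v s with hh
  have key : ∀ ℓ : V → S, (∏ v, lam v (ℓ v)) *
      ((if ℓ p = α then (1:ℝ) else 0) * (if ℓ q = β then (1:ℝ) else 0))
      = ∏ v, h v (ℓ v) := by
    intro ℓ
    simp only [hh]
    rw [Finset.prod_mul_distrib]
    have h1 : ∀ v, (if v = p then (if ℓ v = α then (1:ℝ) else 0)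
        else if v = q then (if ℓ v = β then (1:ℝ) else 0) else 1)
        = (if v = p then (if ℓ p = α then (1:ℝ) else 0)
          else if v = q then (if ℓ q = β then (1:ℝ) else 0) else 1) := by
      intro v; split_ifs with h1 h2 <;> simp_all
    rw [Finset.prod_congr rfl (fun v _ => h1 v), two_point_prod hpq]
    ring
  rw [Finset.sum_congr rfl (fun ℓ _ => key ℓ)]
  have e1 : ∏ v, ∑ s, h v s
      = ∑ ℓ ∈ Fintype.piFinset (fun _ : V => (univ : Finset S)), ∏ v, h v (ℓ v) :=
    Finset.prod_univ_sum _ _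
  rw [← Fintype.piFinset_univ, ← e1]
  have h2 : ∀ v, (∑ s, h v s)
      = (if v = p then lam p α else if v = q then lam q β else 1) := by
    intro v
    simp only [hh]
    split_ifs with h1 h2
    · subst h1; simp [ite_mul, Finset.sum_ite_eq' univ α (lam v)]
    · subst h2; simp [ite_mul, Finset.sum_ite_eq' univ β (lam v)]
    · simp [hsum v]
  rw [Finset.prod_congr rfl (fun v _ => h2 v), two_point_prod hpq]

lemma weight_sum {V S : Type*} [Fintype V] [Fintype S] [DecidableEq V]
    (lam : V → S → ℝ) (hsum : ∀ v, ∑ α, lam v α = 1) :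
    ∑ ℓ : V → S, (∏ v, lam v (ℓ v)) = 1 := by
  have e1 : ∏ v, ∑ s, lam v s
      = ∑ ℓ ∈ Fintype.piFinset (fun _ : V => (univ : Finset S)), ∏ v, lam v (ℓ v) :=
    Finset.prod_univ_sum _ _
  rw [← Fintype.piFinset_univ, ← e1]
  simp [hsum]

lemma expectation {V S : Type*} [Fintype V] [Fintype S] [DecidableEq V] [DecidableEq S]
    (lam : V → S → ℝ) (hsum : ∀ v, ∑ α, lam v α = 1)
    {p q : V} (hpq : p ≠ q) (g : S → S → ℝ) :
    ∑ ℓ : V → S, (∏ v, lam v (ℓ v)) * g (ℓ p) (ℓ q)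
      = ∑ α, ∑ β, lam p α * lam q β * g α β := by
  have h : ∀ ℓ : V → S, g (ℓ p) (ℓ q) =
      ∑ α, ∑ β, ((if ℓ p = α then (1:ℝ) else 0) * (if ℓ q = β then (1:ℝ) else 0)) * g α β := by
    intro ℓ
    simp [ite_mul, Finset.sum_ite_eq']
  calc ∑ ℓ : V → S, (∏ v, lam v (ℓ v)) * g (ℓ p) (ℓ q)
      = ∑ ℓ : V → S, ∑ α, ∑ β, ((∏ v, lam v (ℓ v)) *
          ((if ℓ p = α then (1:ℝ) else 0) * (if ℓ q = β then (1:ℝ) else 0))) * g α β := by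
        refine Finset.sum_congr rfl fun ℓ _ => ?_
        rw [h ℓ, Finset.mul_sum]
        refine Finset.sum_congr rfl fun α _ => ?_
        rw [Finset.mul_sum]
        refine Finset.sum_congr rfl fun β _ => ?_
        ring
    _ = ∑ α, ∑ β, ∑ ℓ : V → S, ((∏ v, lam v (ℓ v)) *
          ((if ℓ p = α then (1:ℝ) else 0) * (if ℓ q = β then (1:ℝ) else 0))) * g α β := by
        rw [Finset.sum_comm]
        exact Finset.sum_congr rfl fun α _ => Finset.sum_comm
    _ = ∑ α, ∑ β, lam p α * lam q β * g α β := by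
        refine Finset.sum_congr rfl fun α _ => Finset.sum_congr rfl fun β _ => ?_
        rw [← Finset.sum_mul, marginal lam hsum hpq α β]

/-- Sequential rounding existence: for every fractional label assignment
there is an integral label assignment with at least the same utility minus cost. -/
theorem exists_integral_rounding
    {V S E : Type*} [Fintype V] [Fintype S] [Fintype E] [Nonempty S]
    (a b : E → V) (hab : ∀ e, a e ≠ b e)
    (u c : E → S → S → ℝ)
    (hu : ∀ e α β, 0 ≤ u e α β) (hc : ∀ e α β, 0 ≤ c e α β)
    (lam : V → S → ℝ)
    (hlam0 : ∀ v α, 0 ≤ lam v α) (hlam1 : ∀ v α, lam v α ≤ 1)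
    (hsum : ∀ v, ∑ α, lam v α = 1) :
    ∃ ℓ : V → S,
      (∑ e, u e (ℓ (a e)) (ℓ (b e))) - (∑ e, c e (ℓ (a e)) (ℓ (b e))) ≥
        (∑ e, ∑ α, ∑ β, lam (a e) α * lam (b e) β * u e α β) -
        (∑ e, ∑ α, ∑ β, lam (a e) α * lam (b e) β * c e α β) := by
  classical
  set W : (V → S) → ℝ := fun ℓ => ∏ v, lam v (ℓ v) with hW
  set f : (V → S) → ℝ := fun ℓ =>
    (∑ e, u e (ℓ (a e)) (ℓ (b e))) - (∑ e, c e (ℓ (a e)) (ℓ (b e))) with hf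
  set F : ℝ := (∑ e, ∑ α, ∑ β, lam (a e) α * lam (b e) β * u e α β) -
        (∑ e, ∑ α, ∑ β, lam (a e) α * lam (b e) β * c e α β) with hF
  have hW0 : ∀ ℓ, 0 ≤ W ℓ := fun ℓ => Finset.prod_nonneg fun v _ => hlam0 v (ℓ v)
  have hWsum : ∑ ℓ, W ℓ = 1 := weight_sum lam hsum
  have key : ∀ g : E → S → S → ℝ,
      ∑ ℓ : V → S, W ℓ * ∑ e, g e (ℓ (a e)) (ℓ (b e))
        = ∑ e, ∑ α, ∑ β, lam (a e) α * lam (b e) β * g e α β := by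
    intro g
    simp_rw [Finset.mul_sum]
    rw [Finset.sum_comm]
    exact Finset.sum_congr rfl fun e _ => expectation lam hsum (hab e) (g e)
  have hexp : ∑ ℓ, W ℓ * f ℓ = F := by
    simp only [hf, hF, mul_sub]
    rw [Finset.sum_sub_distrib, key u, key c]
  by_contra hcon
  push_neg at hcon
  have hcon' : ∀ ℓ : V → S, f ℓ < F := fun ℓ => hcon ℓ
  obtain ⟨ℓ0, -, hpos⟩ : ∃ ℓ0 ∈ (univ : Finset (V → S)), (0:ℝ) < W ℓ0 := by
    apply Finset.exists_lt_of_sum_lt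
    simp [hWsum]
  have hlt : ∑ ℓ, W ℓ * f ℓ < ∑ ℓ : V → S, W ℓ * F := by
    refine Finset.sum_lt_sum (fun ℓ _ => mul_le_mul_of_nonneg_left (hcon' ℓ).le (hW0 ℓ))
      ⟨ℓ0, Finset.mem_univ _, mul_lt_mul_of_pos_left (hcon' ℓ0) hpos⟩
  rw [← Finset.sum_mul, hWsum, one_mul, hexp] at hlt
  exact lt_irrefl F hlt
end

section
/- Let k ≥ 1 be an integer, ε ∈ [0,1], μ ∈ (0,1], set δ := εμ/(6k) and η_i := 1 + (1 − i/k)·εμ/2 for i = 0,…,k. Suppose (u_i)_{i=0}^k and (c_i)_{i=0}^k are nonnegative reals with u_0 − c_0 ≥ μ·u_0, and for every i ∈ {1,…,k}: u_i − η_i·c_i ≥ u_{i−1} − η_i·c_{i−1} − δ·(u_{i−1} + η_i·c_{i−1}). Then u_k − c_k ≥ (1 − ε)·(u_0 − c_0). -/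
open Finset

set_option maxHeartbeats 1000000 in
/-- Arithmetic core of the gradual rounding analysis with the
dynamically adapted potentials Φ_i = u_i − η_i·c_i. -/
theorem gradual_rounding_potential
    (k : ℕ) (hk : 1 ≤ k) (ε μ : ℝ) (hε0 : 0 ≤ ε) (hε1 : ε ≤ 1)
    (hμ0 : 0 < μ) (hμ1 : μ ≤ 1)
    (δ : ℝ) (hδ : δ = ε * μ / (6 * k))
    (η : ℕ → ℝ) (hη : ∀ i, η i = 1 + (1 - (i : ℝ) / k) * (ε * μ / 2))
    (u c : ℕ → ℝ) (hu : ∀ i, 0 ≤ u i) (hc : ∀ i, 0 ≤ c i)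
    (hinit : u 0 - c 0 ≥ μ * u 0)
    (hstep : ∀ i ∈ Finset.Icc 1 k,
      u i - η i * c i ≥
        u (i - 1) - η i * c (i - 1) - δ * (u (i - 1) + η i * c (i - 1))) :
    u k - c k ≥ (1 - ε) * (u 0 - c 0) := by
  have hkR : (0:ℝ) < (k:ℝ) := by exact_mod_cast hk
  have hkR1 : (1:ℝ) ≤ (k:ℝ) := by exact_mod_cast hk
  have hεμ0 : 0 ≤ ε * μ := mul_nonneg hε0 hμ0.le
  have hεμ1 : ε * μ ≤ 1 := by nlinarith
  have hδ0 : 0 ≤ δ := by rw [hδ]; positivity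
  have hδk : δ * k = ε * μ / 6 := by rw [hδ]; field_simp
  have hδ1 : δ ≤ 1 / 6 := by nlinarith
  -- per-step inequality for the potential
  have key : ∀ i, 1 ≤ i → i ≤ k →
      (1 - δ) * (u (i-1) - η (i-1) * c (i-1)) ≤ u i - η i * c i := by
    intro i h1 hik
    have hst := hstep i (Finset.mem_Icc.mpr ⟨h1, hik⟩)
    have hi1 : (1:ℝ) ≤ (i:ℝ) := by exact_mod_cast h1
    have hcast : ((i-1 : ℕ) : ℝ) = (i:ℝ) - 1 := by
      have := Nat.cast_sub h1 (R := ℝ); simpa using this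
    have hηd : η (i-1) = η i + 3 * δ := by
      rw [hη, hη, hδ, hcast]; field_simp; ring
    have hηile : η i ≤ 1 + ε * μ / 2 - 3 * δ := by
      have he : 1 + ε * μ / 2 - 3 * δ - η i = ((i:ℝ) - 1) * (ε * μ) / (2 * k) := by
        rw [hη, hδ]; field_simp; ring
      have : 0 ≤ ((i:ℝ) - 1) * (ε * μ) / (2 * k) :=
        div_nonneg (mul_nonneg (by linarith) hεμ0) (by positivity)
      linarith [he ▸ this]
    have h3 : 0 ≤ δ * c (i-1) * (3 - 2 * η i - 3 * δ) := by
      have : 0 ≤ 3 - 2 * η i - 3 * δ := by nlinarith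
      exact mul_nonneg (mul_nonneg hδ0 (hc _)) this
    rw [hηd]
    nlinarith [hst, h3]
  have h1δ : 0 ≤ 1 - δ := by linarith
  -- iterate
  have main : ∀ i, i ≤ k → (1 - δ)^i * (u 0 - η 0 * c 0) ≤ u i - η i * c i := by
    intro i
    induction i with
    | zero => intro _; simp
    | succ n ih =>
      intro h
      have hn : n ≤ k := Nat.le_of_succ_le h
      have hkey := key (n+1) (Nat.le_add_left 1 n) h
      simp only [Nat.add_sub_cancel] at hkey
      have := mul_le_mul_of_nonneg_left (ih hn) h1δ
      calc (1 - δ)^(n+1) * (u 0 - η 0 * c 0)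
          = (1 - δ) * ((1 - δ)^n * (u 0 - η 0 * c 0)) := by ring
        _ ≤ (1 - δ) * (u n - η n * c n) := this
        _ ≤ u (n+1) - η (n+1) * c (n+1) := hkey
  have hmain := main k le_rfl
  -- endpoint values of η
  have hηk : η k = 1 := by rw [hη]; field_simp; ring
  have hu0c0 : 0 ≤ u 0 - c 0 := by nlinarith [hu 0]
  have hc0u0 : c 0 ≤ u 0 := by linarith
  have hΦ0 : (1 - ε / 2) * (u 0 - c 0) ≤ u 0 - η 0 * c 0 := by
    rw [hη]; simp only [Nat.cast_zero, zero_div]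
    have h1 : ε * (μ * u 0) ≤ ε * (u 0 - c 0) := mul_le_mul_of_nonneg_left hinit hε0
    have h2 : ε * μ * c 0 ≤ ε * μ * u 0 :=
      mul_le_mul_of_nonneg_left hc0u0 (mul_nonneg hε0 hμ0.le)
    linarith
  have hΦ0nn : 0 ≤ u 0 - η 0 * c 0 := by nlinarith
  -- Bernoulli
  have hbern : 1 - (k:ℝ) * δ ≤ (1 - δ)^k := by
    have := one_add_mul_le_pow (a := -δ) (by linarith) k
    simpa [mul_comm, ← sub_eq_add_neg] using this
  have hkδ : (k:ℝ) * δ = ε * μ / 6 := by rw [mul_comm]; exact hδk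
  have hpow0 : 0 ≤ (1 - δ)^k := pow_nonneg h1δ k
  have h1 : (1 - ε * μ / 6) * ((1 - ε / 2) * (u 0 - c 0)) ≤ u k - η k * c k := by
    calc (1 - ε * μ / 6) * ((1 - ε / 2) * (u 0 - c 0))
        ≤ (1 - ε * μ / 6) * (u 0 - η 0 * c 0) := by
          apply mul_le_mul_of_nonneg_left hΦ0; linarith
      _ = (1 - (k:ℝ) * δ) * (u 0 - η 0 * c 0) := by rw [hkδ]
      _ ≤ (1 - δ)^k * (u 0 - η 0 * c 0) := by
          apply mul_le_mul_of_nonneg_right hbern hΦ0nn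
      _ ≤ u k - η k * c k := hmain
  rw [hηk] at h1
  have hcoef : 1 - ε ≤ (1 - ε * μ / 6) * (1 - ε / 2) := by nlinarith
  have := mul_le_mul_of_nonneg_right hcoef hu0c0
  nlinarith [h1, this]
end

section
/- Let V be a finite vertex set, Σ a finite label alphabet, and E a finite index set of edges with distinct endpoints a_e, b_e ∈ V and nonnegative utility and cost functions u_e, c_e : Σ × Σ → ℝ≥0. Let λ be a fractional label assignment such that every nonzero value λ_α(v) satisfies λ_α(v) ≥ λ_min for some λ_min ∈ (0,1], let ε ∈ (0,1] and μ ∈ (0,1], and assume u(λ) − c(λ) ≥ μ·u(λ). Let k be the smallest nonnegative integer with 2^k ≥ 9/(ε·μ·λ_min). Then there exists a fractional label assignment λ′ such that every value λ′_α(v) is an integer multiple of 2^{−k}, λ′_α(v) = 0 whenever λ_α(v) = 0, Σ_{α∈Σ} λ′_α(v) = 1 for all v, and both u(λ′) − c(λ′) ≥ (1 − ε)·(u(λ) − c(λ)) and u(λ′) − c(λ′) ≥ (μ/2)·u(λ′). -/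
open Finset

/-- Utility (or cost) of a fractional label assignment with respect to
edge functions `f e : Σ × Σ → ℝ`. -/
noncomputable def fracTotal {V S E : Type*} [Fintype S] [Fintype E]
    (a b : E → V) (f : E → S → S → ℝ) (lam : V → S → ℝ) : ℝ :=
  ∑ e, ∑ α, ∑ β, lam (a e) α * lam (b e) β * f e α β

set_option maxHeartbeats 1000000 in
/-- Preprocessing lemma: an arbitrary fractional label assignment with
nonzero values at least `lmin` and separation `u(λ) − c(λ) ≥ μ·u(λ)` can be rounded
to a `1/2^k`-integral fractional assignment (for the smallest `k` with
`2^k ≥ 9/(ε·μ·λ_min)`) approximately preserving `u − c` and the separation. -/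
theorem exists_dyadic_fractional_rounding
    {V S E : Type*} [Fintype V] [Fintype S] [Fintype E] [Nonempty S]
    (a b : E → V) (hab : ∀ e, a e ≠ b e)
    (u c : E → S → S → ℝ)
    (hu : ∀ e α β, 0 ≤ u e α β) (hc : ∀ e α β, 0 ≤ c e α β)
    (lam : V → S → ℝ)
    (hlam0 : ∀ v α, 0 ≤ lam v α) (hlam1 : ∀ v α, lam v α ≤ 1)
    (hsum : ∀ v, ∑ α, lam v α = 1)
    (lmin : ℝ) (hlmin0 : 0 < lmin) (hlmin1 : lmin ≤ 1)
    (hmin : ∀ v α, lam v α ≠ 0 → lmin ≤ lam v α)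
    (ε μ : ℝ) (hε0 : 0 < ε) (hε1 : ε ≤ 1) (hμ0 : 0 < μ) (hμ1 : μ ≤ 1)
    (hsep : fracTotal a b u lam - fracTotal a b c lam ≥ μ * fracTotal a b u lam)
    (k : ℕ) (hk : (2 : ℝ) ^ k ≥ 9 / (ε * μ * lmin))
    (hkmin : ∀ j : ℕ, (2 : ℝ) ^ j ≥ 9 / (ε * μ * lmin) → k ≤ j) :
    ∃ lam' : V → S → ℝ,
      (∀ v α, ∃ m : ℕ, lam' v α = (m : ℝ) / 2 ^ k) ∧
      (∀ v α, lam v α = 0 → lam' v α = 0) ∧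
      (∀ v, ∑ α, lam' v α = 1) ∧
      fracTotal a b u lam' - fracTotal a b c lam' ≥
        (1 - ε) * (fracTotal a b u lam - fracTotal a b c lam) ∧
      fracTotal a b u lam' - fracTotal a b c lam' ≥
        (μ / 2) * fracTotal a b u lam' := by
  classical
  have h2k : (0:ℝ) < 2 ^ k := by positivity
  set t : ℝ := ε * μ / 9 with ht
  have ht0 : 0 < t := by positivity
  have ht1 : t ≤ 1 / 9 := by
    rw [ht]; nlinarith
  have h1t : (0:ℝ) ≤ 1 - t := by linarith
  have hdy : (1:ℝ) / 2 ^ k ≤ t * lmin := by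
    have h9 : 0 < ε * μ * lmin := by positivity
    rw [ge_iff_le, div_le_iff₀ h9] at hk
    rw [div_le_iff₀ h2k, ht]
    nlinarith
  -- per-vertex construction
  have key : ∀ v : V, ∃ g : S → ℝ,
      (∀ α, ∃ m : ℕ, g α = (m : ℝ) / 2 ^ k) ∧
      (∀ α, lam v α = 0 → g α = 0) ∧
      (∑ α, g α = 1) ∧
      (∀ α, (1 - t) * lam v α ≤ g α ∧ g α ≤ (1 + t) * lam v α) := by
    intro v
    set g0 : S → ℕ := fun α => ⌊lam v α * 2 ^ k⌋₊ with hg0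
    have hg0le : ∀ α, (g0 α : ℝ) ≤ lam v α * 2 ^ k :=
      fun α => Nat.floor_le (mul_nonneg (hlam0 v α) (by positivity))
    have hg0gt : ∀ α, lam v α * 2 ^ k < (g0 α : ℝ) + 1 :=
      fun α => Nat.lt_floor_add_one _
    set Sup : Finset S := Finset.univ.filter (fun α => lam v α ≠ 0) with hSup
    have hg0zero : ∀ α, lam v α = 0 → g0 α = 0 := by
      intro α h0; simp [hg0, h0]
    have hsumle : ∑ α, g0 α ≤ 2 ^ k := by
      have h : ((∑ α, g0 α : ℕ) : ℝ) ≤ ((2 ^ k : ℕ) : ℝ) := by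
        push_cast
        calc ∑ α, (g0 α : ℝ) ≤ ∑ α, lam v α * 2 ^ k :=
              Finset.sum_le_sum fun α _ => hg0le α
          _ = 2 ^ k := by rw [← Finset.sum_mul, hsum v, one_mul]
      exact_mod_cast h
    set m : ℕ := 2 ^ k - ∑ α, g0 α with hm
    have hmcast : (m : ℝ) = 2 ^ k - ∑ α, (g0 α : ℝ) := by
      rw [hm, Nat.cast_sub hsumle]; push_cast; ring
    have hSupne : Sup.Nonempty := by
      by_contra h
      rw [Finset.not_nonempty_iff_eq_empty] at h
      have : ∑ α, lam v α = 0 := by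
        apply Finset.sum_eq_zero
        intro α _
        by_contra h0
        have : α ∈ Sup := by simp [hSup, h0]
        simp [h] at this
      rw [hsum v] at this; norm_num at this
    have hmle : m ≤ Sup.card := by
      have hlt : (m : ℝ) < Sup.card := by
        have hall : ∑ α, (lam v α * 2 ^ k - (g0 α : ℝ)) = 2 ^ k - ∑ α, (g0 α : ℝ) := by
          rw [Finset.sum_sub_distrib, ← Finset.sum_mul, hsum v, one_mul]
        have heq : (m : ℝ) = ∑ α ∈ Sup, (lam v α * 2 ^ k - g0 α) := by
          rw [hmcast, ← hall]
          refine (Finset.sum_subset (Finset.subset_univ _) ?_).symm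
          intro α _ hα
          have h0 : lam v α = 0 := by
            by_contra h0
            exact hα (by simp [hSup, h0])
          simp [h0, hg0zero α h0]
        rw [heq]
        calc ∑ α ∈ Sup, (lam v α * 2 ^ k - g0 α) < ∑ _α ∈ Sup, (1:ℝ) := by
              apply Finset.sum_lt_sum_of_nonempty hSupne
              intro α _
              linarith [hg0gt α]
          _ = Sup.card := by simp
      exact_mod_cast hlt.le
    obtain ⟨T, hTsub, hTcard⟩ := Finset.exists_subset_card_eq hmle
    refine ⟨fun α => ((g0 α : ℝ) + if α ∈ T then 1 else 0) / 2 ^ k, ?_, ?_, ?_, ?_⟩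
    · intro α
      refine ⟨g0 α + (if α ∈ T then 1 else 0), ?_⟩
      split_ifs with h <;> simp only [h] <;> push_cast <;> ring
    · intro α h0
      have hT : α ∉ T := by
        intro hT
        exact (Finset.mem_filter.1 (hTsub hT)).2 h0
      simp [hg0zero α h0, hT]
    · rw [← Finset.sum_div, Finset.sum_add_distrib]
      have h1 : ∑ α, (if α ∈ T then (1:ℝ) else 0) = T.card := by
        simp [Finset.sum_ite_mem]
      rw [h1, hTcard, hmcast]
      field_simp
      ring
    · intro α
      by_cases h0 : lam v α = 0
      · have hT : α ∉ T := by
          intro hT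
          exact (Finset.mem_filter.1 (hTsub hT)).2 h0
        simp [hg0zero α h0, hT, h0]
      · have hl : lmin ≤ lam v α := hmin v α h0
        have hdy2 : (1:ℝ) ≤ t * lam v α * 2 ^ k := by
          rw [div_le_iff₀ h2k] at hdy
          nlinarith
        have hite0 : (0:ℝ) ≤ (if α ∈ T then (1:ℝ) else 0) := by positivity
        have hite1 : (if α ∈ T then (1:ℝ) else 0) ≤ 1 := by split_ifs <;> norm_num
        constructor
        · rw [le_div_iff₀ h2k]
          nlinarith [hg0gt α]
        · rw [div_le_iff₀ h2k]
          nlinarith [hg0le α]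
  choose lam' h1 h2 h3 h4 using key
  have hpos : ∀ v α, 0 ≤ lam' v α := fun v α =>
    le_trans (mul_nonneg h1t (hlam0 v α)) (h4 v α).1
  have hmono : ∀ f : E → S → S → ℝ, (∀ e α β, 0 ≤ f e α β) →
      (1 - t) ^ 2 * fracTotal a b f lam ≤ fracTotal a b f lam' ∧
      fracTotal a b f lam' ≤ (1 + t) ^ 2 * fracTotal a b f lam := by
    intro f hf
    constructor
    · rw [fracTotal, fracTotal, Finset.mul_sum]
      refine Finset.sum_le_sum fun e _ => ?_
      rw [Finset.mul_sum]
      refine Finset.sum_le_sum fun α _ => ?_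
      rw [Finset.mul_sum]
      refine Finset.sum_le_sum fun β _ => ?_
      have hA := (h4 (a e) α).1
      have hB := (h4 (b e) β).1
      have hp : ((1-t) * lam (a e) α) * ((1-t) * lam (b e) β) ≤
          lam' (a e) α * lam' (b e) β :=
        mul_le_mul hA hB (mul_nonneg h1t (hlam0 (b e) β)) (hpos (a e) α)
      calc (1-t)^2 * (lam (a e) α * lam (b e) β * f e α β)
          = (((1-t) * lam (a e) α) * ((1-t) * lam (b e) β)) * f e α β := by ring
        _ ≤ (lam' (a e) α * lam' (b e) β) * f e α β :=
            mul_le_mul_of_nonneg_right hp (hf e α β)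
    · rw [fracTotal, fracTotal, Finset.mul_sum]
      refine Finset.sum_le_sum fun e _ => ?_
      rw [Finset.mul_sum]
      refine Finset.sum_le_sum fun α _ => ?_
      rw [Finset.mul_sum]
      refine Finset.sum_le_sum fun β _ => ?_
      have hA := (h4 (a e) α).2
      have hB := (h4 (b e) β).2
      have hp : lam' (a e) α * lam' (b e) β ≤
          ((1+t) * lam (a e) α) * ((1+t) * lam (b e) β) :=
        mul_le_mul hA hB (hpos (b e) β)
          (mul_nonneg (by linarith : (0:ℝ) ≤ 1 + t) (hlam0 (a e) α))
      calc lam' (a e) α * lam' (b e) β * f e α β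
          ≤ (((1+t) * lam (a e) α) * ((1+t) * lam (b e) β)) * f e α β :=
            mul_le_mul_of_nonneg_right hp (hf e α β)
        _ = (1+t)^2 * (lam (a e) α * lam (b e) β * f e α β) := by ring
  set U := fracTotal a b u lam with hU
  set C := fracTotal a b c lam with hC
  set U' := fracTotal a b u lam' with hU'
  set C' := fracTotal a b c lam' with hC'
  have hU0 : 0 ≤ U := by
    rw [hU, fracTotal]
    refine Finset.sum_nonneg fun e _ => Finset.sum_nonneg fun α _ =>
      Finset.sum_nonneg fun β _ => ?_
    exact mul_nonneg (mul_nonneg (hlam0 _ _) (hlam0 _ _)) (hu _ _ _)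
  have hC0 : 0 ≤ C := by
    rw [hC, fracTotal]
    refine Finset.sum_nonneg fun e _ => Finset.sum_nonneg fun α _ =>
      Finset.sum_nonneg fun β _ => ?_
    exact mul_nonneg (mul_nonneg (hlam0 _ _) (hlam0 _ _)) (hc _ _ _)
  have hCU : C ≤ (1 - μ) * U := by nlinarith [hsep]
  obtain ⟨hul, hur⟩ := hmono u hu
  obtain ⟨hcl, hcr⟩ := hmono c hc
  rw [← hU, ← hU'] at hul hur
  rw [← hC, ← hC'] at hcl hcr
  clear_value U C U' C'
  refine ⟨lam', h1, h2, h3, ?_, ?_⟩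
  · -- goal 1
    have hAcoef : (0:ℝ) ≤ ε + 2*t + t^2 := by positivity
    have hB1 : (ε + 2*t + t^2) * C ≤ (ε + 2*t + t^2) * ((1 - μ) * U) :=
      mul_le_mul_of_nonneg_left hCU hAcoef
    have hεμ : ε * μ = 9 * t := by rw [ht]; ring
    have h2tt : (0:ℝ) ≤ 2*t + t^2 := by positivity
    have hBcoef : (ε + 2*t + t^2) * (1 - μ) ≤ ε - 2*t + t^2 := by
      nlinarith [hεμ, ht0.le, mul_nonneg hμ0.le h2tt]
    have hB2 : (ε + 2*t + t^2) * (1 - μ) * U ≤ (ε - 2*t + t^2) * U :=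
      mul_le_mul_of_nonneg_right hBcoef hU0
    rw [← hU', ← hC']
    linarith [hul, hcr, hB1, hB2]
  · -- goal 2
    have hp1 : (1+t)^2 * C ≤ (1+t)^2 * ((1 - μ) * U) :=
      mul_le_mul_of_nonneg_left hCU (by positivity)
    have hp2 : (μ/2) * U' ≤ (μ/2) * ((1+t)^2 * U) :=
      mul_le_mul_of_nonneg_left hur (by positivity)
    have htμ : 9 * t ≤ μ := by
      have hεμ : ε * μ = 9 * t := by rw [ht]; ring
      have h2 : ε * μ ≤ μ := mul_le_of_le_one_left hμ0.le hε1
      linarith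
    have h2tt : (0:ℝ) ≤ 2*t + t^2 := by positivity
    have hcoef2 : (1+t)^2 * (1 - μ) + (μ/2) * (1+t)^2 ≤ (1-t)^2 := by
      linarith [htμ, ht0.le, mul_nonneg hμ0.le h2tt]
    have hp3 : ((1+t)^2 * (1 - μ) + (μ/2) * (1+t)^2) * U ≤ (1-t)^2 * U :=
      mul_le_mul_of_nonneg_right hcoef2 hU0
    rw [← hU', ← hC']
    linarith [hul, hcr, hp1, hp2, hp3]
end

section
/- Let G = (V,E) be a finite simple graph with vertex weights w : V → ℝ≥0 and let x : V → {0,1} be any 0/1 vector. Then there exists an independent set I of G with Σ_{v∈I} w(v) ≥ Σ_{v∈V} w(v)·x_v − Σ_{{u,v}∈E} min{w(u), w(v)}·x_u·x_v. -/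
open Finset

/-- From any 0/1 vector one obtains an independent set of weight at
least utility minus cost, where the cost sums `min(w u, w v)·x_u·x_v` over edges
(each unordered edge counted once, i.e. half the ordered adjacency sum). -/
theorem exists_independent_set_of_zero_one_vector
    {V : Type*} [Fintype V] [DecidableEq V] (G : SimpleGraph V) [DecidableRel G.Adj]
    (w : V → ℝ) (hw : ∀ v, 0 ≤ w v)
    (x : V → ℝ) (hx : ∀ v, x v = 0 ∨ x v = 1) :
    ∃ I : Finset V, (∀ u ∈ I, ∀ v ∈ I, ¬ G.Adj u v) ∧
      ∑ v ∈ I, w v ≥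
        (∑ v, w v * x v) -
          (∑ u, ∑ v, if G.Adj u v then min (w u) (w v) * x u * x v else 0) / 2 := by
  classical
  set f : V → V → ℝ := fun a b => if G.Adj a b then min (w a) (w b) else 0 with hfdef
  have hf0 : ∀ a b, 0 ≤ f a b := by
    intro a b
    simp only [hfdef]
    split
    · exact le_min (hw a) (hw b)
    · exact le_refl 0
  -- key lemma by strong induction
  have key : ∀ S : Finset V, ∃ I : Finset V, (∀ u ∈ I, ∀ v ∈ I, ¬ G.Adj u v) ∧
      ∑ v ∈ I, w v ≥ ∑ v ∈ S, w v - (∑ u ∈ S, ∑ v ∈ S, f u v) / 2 := by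
    intro S
    induction S using Finset.strongInduction with
    | _ S ih =>
      by_cases hS : ∀ u ∈ S, ∀ v ∈ S, ¬ G.Adj u v
      · refine ⟨S, hS, ?_⟩
        have : (0:ℝ) ≤ ∑ u ∈ S, ∑ v ∈ S, f u v :=
          Finset.sum_nonneg fun u _ => Finset.sum_nonneg fun v _ => hf0 u v
        linarith
      · push_neg at hS
        obtain ⟨u, hu, v, hv, hadj⟩ := hS
        have step : ∀ u v : V, u ∈ S → v ∈ S → G.Adj u v → w u ≤ w v →
            ∃ I : Finset V, (∀ a ∈ I, ∀ b ∈ I, ¬ G.Adj a b) ∧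
              ∑ a ∈ I, w a ≥ ∑ a ∈ S, w a - (∑ a ∈ S, ∑ b ∈ S, f a b) / 2 := by
          intro u v hu hv hadj hle
          set S' := S.erase u with hS'def
          have hvS' : v ∈ S' := Finset.mem_erase.mpr ⟨hadj.ne', hv⟩
          obtain ⟨I, hI, hge⟩ := ih S' (Finset.erase_ssubset hu)
          refine ⟨I, hI, ?_⟩
          have h1 : ∑ a ∈ S', w a = ∑ a ∈ S, w a - w u :=
            Finset.sum_erase_eq_sub hu
          have hins : S = insert u S' := (Finset.insert_erase hu).symm
          have hnot : u ∉ S' := Finset.notMem_erase u S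
          have hexp : ∑ a ∈ S, ∑ b ∈ S, f a b
              = (f u u + ∑ b ∈ S', f u b)
                + (∑ a ∈ S', f a u + ∑ a ∈ S', ∑ b ∈ S', f a b) := by
            rw [hins, Finset.sum_insert hnot]
            congr 1
            · rw [Finset.sum_insert hnot]
            · rw [← Finset.sum_add_distrib]
              exact Finset.sum_congr rfl fun a _ => Finset.sum_insert hnot
          have hfu : f u v = w u := by
            simp only [hfdef]
            rw [if_pos hadj, min_eq_left hle]
          have hfv : f v u = w u := by
            simp only [hfdef]
            rw [if_pos hadj.symm, min_eq_right hle]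
          have h2 : w u ≤ ∑ b ∈ S', f u b := by
            have := Finset.single_le_sum (f := fun b => f u b)
              (fun b _ => hf0 u b) hvS'
            simpa only [hfu] using this
          have h3 : w u ≤ ∑ a ∈ S', f a u := by
            have := Finset.single_le_sum (f := fun a => f a u)
              (fun a _ => hf0 a u) hvS'
            simpa only [hfv] using this
          have h4 : 0 ≤ f u u := hf0 u u
          linarith
        rcases le_total (w u) (w v) with hle | hle
        · exact step u v hu hv hadj hle
        · exact step v u hv hu hadj.symm hle
  set S : Finset V := Finset.univ.filter (fun v => x v = 1) with hSdef
  have indic : ∀ g : V → ℝ, ∑ v, g v * x v = ∑ v ∈ S, g v := by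
    intro g
    rw [← Finset.sum_filter_add_sum_filter_not Finset.univ (fun v => x v = 1)
      (fun v => g v * x v)]
    have h1 : ∑ v ∈ Finset.univ.filter (fun v => x v = 1), g v * x v = ∑ v ∈ S, g v :=
      Finset.sum_congr rfl fun v hv => by
        rw [(Finset.mem_filter.mp hv).2, mul_one]
    have h2 : ∑ v ∈ Finset.univ.filter (fun v => ¬ x v = 1), g v * x v = 0 :=
      Finset.sum_eq_zero fun v hv => by
        have hx0 : x v = 0 := (hx v).resolve_right (Finset.mem_filter.mp hv).2
        rw [hx0, mul_zero]
    rw [h1, h2, add_zero]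
  have hutil : ∑ v, w v * x v = ∑ v ∈ S, w v := indic w
  have hcost : (∑ u, ∑ v, if G.Adj u v then min (w u) (w v) * x u * x v else 0)
      = ∑ u ∈ S, ∑ v ∈ S, f u v := by
    have hterm : ∀ u v : V, (if G.Adj u v then min (w u) (w v) * x u * x v else 0)
        = (f u v * x v) * x u := by
      intro u v
      simp only [hfdef]
      split
      · ring
      · ring
    calc (∑ u, ∑ v, if G.Adj u v then min (w u) (w v) * x u * x v else 0)
        = ∑ u, (∑ v, f u v * x v) * x u := by
          refine Finset.sum_congr rfl fun u _ => ?_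
          rw [Finset.sum_mul]
          exact Finset.sum_congr rfl fun v _ => hterm u v
      _ = ∑ u ∈ S, ∑ v, f u v * x v := indic _
      _ = ∑ u ∈ S, ∑ v ∈ S, f u v := Finset.sum_congr rfl fun u _ => indic _
  obtain ⟨I, hI, hge⟩ := key S
  refine ⟨I, hI, ?_⟩
  rw [hutil, hcost]
  exact hge
end

section
/- Let G = (V,E) be a finite simple graph and fix an orientation of its edges (each edge is assigned a head among its two endpoints). Call a vertex v good if 3·indeg(v) ≥ deg(v), where indeg(v) is the number of edges oriented into v and deg(v) is the degree of v in G. Then Σ_{good v} deg(v) ≥ |E|/2. -/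
open Finset

/-- For any orientation (given by a head function on edges) of a finite
simple graph, the vertices `v` with `3·indeg(v) ≥ deg(v)` ("good" vertices) carry at
least half of all edge endpoints: `Σ_{good v} deg(v) ≥ |E|/2`. -/
theorem good_vertices_carry_half_edges
    {V : Type*} [Fintype V] [DecidableEq V] (G : SimpleGraph V) [DecidableRel G.Adj]
    (head : Sym2 V → V) (hhead : ∀ e ∈ G.edgeSet, head e ∈ e) :
    (∑ v ∈ Finset.univ.filter
        (fun v => G.degree v ≤ 3 * (G.edgeFinset.filter (fun e => head e = v)).card),
      (G.degree v : ℝ)) ≥ (G.edgeFinset.card : ℝ) / 2 := by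
  set indeg : V → ℕ := fun v => (G.edgeFinset.filter (fun e => head e = v)).card with hindeg
  set E : ℕ := G.edgeFinset.card with hE
  -- sum of indegrees = number of edges
  have h1 : ∑ v, indeg v = E := by
    rw [hE, Finset.card_eq_sum_card_fiberwise (f := head) (t := Finset.univ)]
    intro x _; exact Finset.mem_univ _
  -- indeg ≤ degree
  have h2 : ∀ v, indeg v ≤ G.degree v := by
    intro v
    rw [← G.card_incidenceFinset_eq_degree]
    apply Finset.card_le_card
    intro e he
    simp only [Finset.mem_filter] at he
    rw [SimpleGraph.mem_incidenceFinset]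
    refine ⟨SimpleGraph.mem_edgeFinset.mp he.1, ?_⟩
    rw [← he.2]
    exact hhead e (SimpleGraph.mem_edgeFinset.mp he.1)
  have h3 : ∑ v, G.degree v = 2 * E := G.sum_degrees_eq_twice_card_edges
  -- sum of outdegrees
  have h4 : ∑ v, (G.degree v - indeg v) = E := by
    have : ∑ v, (G.degree v - indeg v) + ∑ v, indeg v = ∑ v, G.degree v := by
      rw [← Finset.sum_add_distrib]
      exact Finset.sum_congr rfl fun v _ => Nat.sub_add_cancel (h2 v)
    omega
  set S := Finset.univ.filter (fun v => G.degree v ≤ 3 * indeg v) with hS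
  have hsplit : ∑ v ∈ S, G.degree v + ∑ v ∈ Sᶜ, G.degree v = 2 * E := by
    rw [Finset.sum_add_sum_compl, h3]
  have hbad : 2 * ∑ v ∈ Sᶜ, G.degree v ≤ 3 * ∑ v ∈ Sᶜ, (G.degree v - indeg v) := by
    rw [Finset.mul_sum, Finset.mul_sum]
    apply Finset.sum_le_sum
    intro v hv
    simp only [hS, Finset.mem_compl, Finset.mem_filter, Finset.mem_univ, true_and,
      not_le] at hv
    have := h2 v
    omega
  have hbad2 : ∑ v ∈ Sᶜ, (G.degree v - indeg v) ≤ E := by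
    rw [← h4]
    exact Finset.sum_le_sum_of_subset (Finset.subset_univ _)
  have key : E ≤ 2 * ∑ v ∈ S, G.degree v := by omega
  -- cast to ℝ
  have : (E : ℝ) ≤ 2 * ∑ v ∈ S, (G.degree v : ℝ) := by
    have := (Nat.cast_le (α := ℝ)).mpr key
    push_cast at this ⊢
    linarith
  linarith
end

section
/- Let G = (V,E) be a finite simple graph with no isolated vertices and injective identifiers ID : V → ℕ; orient each edge {u,v} from u to v iff (deg(u), ID(u)) < (deg(v), ID(v)) lexicographically, and let IN(v), OUT(v) denote in- and out-neighbors. Set x_v := 1/(20·deg(v)). Call v good if 3·|IN(v)| ≥ deg(v), and suppose for each good vertex v we are given a set S_v ⊆ IN(v) with 1/60 ≤ Σ_{u∈S_v} x_u ≤ 4/60. Define u(x) := Σ_{good v} (deg(v)/2)·Σ_{u∈S_v} x_u and c(x) := Σ_{good v} (deg(v)/2)·( Σ_{u∈S_v} Σ_{u′∈S_v} x_u·x_{u′} + Σ_{u∈S_v} Σ_{w∈OUT(u)} x_u·x_w ). Then u(x) − c(x) ≥ u(x)/2. -/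
open Finset

/-- In-neighbors of `v`: neighbors `u` with `(deg u, ID u) < (deg v, ID v)`
lexicographically, i.e. the edge `{u,v}` is oriented `u → v`. -/
def inNbrs {V : Type*} [Fintype V] [DecidableEq V] (G : SimpleGraph V)
    [DecidableRel G.Adj] (ID : V → ℕ) (v : V) : Finset V :=
  (G.neighborFinset v).filter
    (fun u => G.degree u < G.degree v ∨ (G.degree u = G.degree v ∧ ID u < ID v))

/-- Out-neighbors of `v`: neighbors `w` with `(deg v, ID v) < (deg w, ID w)`
lexicographically, i.e. the edge `{v,w}` is oriented `v → w`. -/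
def outNbrs {V : Type*} [Fintype V] [DecidableEq V] (G : SimpleGraph V)
    [DecidableRel G.Adj] (ID : V → ℕ) (v : V) : Finset V :=
  (G.neighborFinset v).filter
    (fun w => G.degree v < G.degree w ∨ (G.degree v = G.degree w ∧ ID v < ID w))

/-- Fractional separation for the pessimistic estimator of one
phase of Luby's MIS algorithm: with `x_v = 1/(20·deg v)` and window sets `S_v`
of in-neighbors of good vertices, we have `u(x) − c(x) ≥ u(x)/2`. -/
theorem luby_estimator_separation
    {V : Type*} [Fintype V] [DecidableEq V] (G : SimpleGraph V) [DecidableRel G.Adj]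
    (hdeg : ∀ v, 0 < G.degree v) (ID : V → ℕ) (hID : Function.Injective ID)
    (S : V → Finset V)
    (hS : ∀ v, G.degree v ≤ 3 * (inNbrs G ID v).card →
      S v ⊆ inNbrs G ID v ∧
      1 / 60 ≤ ∑ u ∈ S v, (1 : ℝ) / (20 * G.degree u) ∧
      ∑ u ∈ S v, (1 : ℝ) / (20 * G.degree u) ≤ 4 / 60) :
    (∑ v ∈ Finset.univ.filter (fun v => G.degree v ≤ 3 * (inNbrs G ID v).card),
        (G.degree v : ℝ) / 2 * ∑ u ∈ S v, (1 : ℝ) / (20 * G.degree u)) -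
      (∑ v ∈ Finset.univ.filter (fun v => G.degree v ≤ 3 * (inNbrs G ID v).card),
        (G.degree v : ℝ) / 2 *
          ((∑ u ∈ S v, ∑ u' ∈ S v,
              ((1 : ℝ) / (20 * G.degree u)) * ((1 : ℝ) / (20 * G.degree u'))) +
            ∑ u ∈ S v, ∑ w ∈ outNbrs G ID u,
              ((1 : ℝ) / (20 * G.degree u)) * ((1 : ℝ) / (20 * G.degree w)))) ≥
    (∑ v ∈ Finset.univ.filter (fun v => G.degree v ≤ 3 * (inNbrs G ID v).card),
        (G.degree v : ℝ) / 2 * ∑ u ∈ S v, (1 : ℝ) / (20 * G.degree u)) / 2 := by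

  set x : V → ℝ := fun u => (1 : ℝ) / (20 * G.degree u) with hx
  have hx0 : ∀ u, 0 ≤ x u := by
    intro u
    have := hdeg u
    positivity
  have key : ∀ v ∈ Finset.univ.filter (fun v => G.degree v ≤ 3 * (inNbrs G ID v).card),
      (G.degree v : ℝ) / 2 *
        ((∑ u ∈ S v, ∑ u' ∈ S v, x u * x u') +
          ∑ u ∈ S v, ∑ w ∈ outNbrs G ID u, x u * x w) ≤
      ((G.degree v : ℝ) / 2 * ∑ u ∈ S v, x u) / 2 := by
    intro v hv
    simp only [mem_filter] at hv
    obtain ⟨hsub, hlo, hhi⟩ := hS v hv.2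
    set σ := ∑ u ∈ S v, x u with hσ
    have hσ0 : 0 ≤ σ := Finset.sum_nonneg fun u _ => hx0 u
    have h1 : (∑ u ∈ S v, ∑ u' ∈ S v, x u * x u') = σ * σ := by
      rw [← Finset.sum_mul_sum]
    have h2 : ∀ u ∈ S v, ∑ w ∈ outNbrs G ID u, x w ≤ 1 / 20 := by
      intro u _
      have hdu := hdeg u
      have hb : ∀ w ∈ outNbrs G ID u, x w ≤ x u := by
        intro w hw
        simp only [outNbrs, mem_filter] at hw
        have hle : G.degree u ≤ G.degree w := by
          rcases hw.2 with h | h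
          · exact le_of_lt h
          · exact le_of_eq h.1
        have hdw := hdeg w
        simp only [hx]
        apply one_div_le_one_div_of_le
        · positivity
        · have : (G.degree u : ℝ) ≤ G.degree w := by exact_mod_cast hle
          linarith
      calc ∑ w ∈ outNbrs G ID u, x w ≤ ∑ w ∈ outNbrs G ID u, x u :=
            Finset.sum_le_sum hb
        _ = (outNbrs G ID u).card * x u := by rw [Finset.sum_const, nsmul_eq_mul]
        _ ≤ (G.degree u : ℝ) * x u := by
            apply mul_le_mul_of_nonneg_right _ (hx0 u)
            have : (outNbrs G ID u).card ≤ G.degree u := by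
              rw [← SimpleGraph.card_neighborFinset_eq_degree]
              exact Finset.card_le_card (Finset.filter_subset _ _)
            exact_mod_cast this
        _ = 1 / 20 := by
            simp only [hx]
            have hdu' : (0:ℝ) < G.degree u := by exact_mod_cast hdu
            field_simp
    have h3 : ∑ u ∈ S v, ∑ w ∈ outNbrs G ID u, x u * x w ≤ σ / 20 := by
      have : ∀ u ∈ S v, ∑ w ∈ outNbrs G ID u, x u * x w ≤ x u * (1/20) := by
        intro u hu
        rw [← Finset.mul_sum]
        exact mul_le_mul_of_nonneg_left (h2 u hu) (hx0 u)
      calc ∑ u ∈ S v, ∑ w ∈ outNbrs G ID u, x u * x w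
          ≤ ∑ u ∈ S v, x u * (1/20) := Finset.sum_le_sum this
        _ = σ / 20 := by rw [← Finset.sum_mul, ← hσ]; ring
    have hbr : (∑ u ∈ S v, ∑ u' ∈ S v, x u * x u') +
        ∑ u ∈ S v, ∑ w ∈ outNbrs G ID u, x u * x w ≤ σ / 2 := by
      rw [h1]
      have : σ * σ ≤ (4/60) * σ := by nlinarith
      linarith
    have hd0 : (0:ℝ) ≤ (G.degree v : ℝ) / 2 := by positivity
    calc (G.degree v : ℝ) / 2 * ((∑ u ∈ S v, ∑ u' ∈ S v, x u * x u') +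
          ∑ u ∈ S v, ∑ w ∈ outNbrs G ID u, x u * x w)
        ≤ (G.degree v : ℝ) / 2 * (σ / 2) := mul_le_mul_of_nonneg_left hbr hd0
      _ = ((G.degree v : ℝ) / 2 * σ) / 2 := by ring
  have hc : (∑ v ∈ Finset.univ.filter (fun v => G.degree v ≤ 3 * (inNbrs G ID v).card),
      (G.degree v : ℝ) / 2 *
        ((∑ u ∈ S v, ∑ u' ∈ S v, x u * x u') +
          ∑ u ∈ S v, ∑ w ∈ outNbrs G ID u, x u * x w)) ≤
      (∑ v ∈ Finset.univ.filter (fun v => G.degree v ≤ 3 * (inNbrs G ID v).card),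
        (G.degree v : ℝ) / 2 * ∑ u ∈ S v, x u) / 2 := by
    rw [Finset.sum_div]
    exact Finset.sum_le_sum key
  linarith
end

section
/- Let G = (V,E) be a finite simple graph with maximum degree at most Δ ≥ 1 and vertex weights w : V → ℝ≥0, and let x : V → [0,1] satisfy u(x) ≥ 2·c(x), where u(x) = Σ_{v∈V} w(v)·x_v and c(x) = Σ_{{u,v}∈E} min{w(u), w(v)}·x_u·x_v. For ε ∈ (0,1], define x′_v := x_v + ε/(2Δ) for every v. Then u(x′) − c(x′) ≥ (1/2 − ε/2)·u(x′). -/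
open Finset

/-- Shifting every fractional value up by `ε/(2Δ)` keeps utility minus
cost at least a `(1/2 − ε/2)` fraction of the utility, provided `u(x) ≥ 2·c(x)`.
Edge sums count each unordered edge once (half the ordered adjacency sum). -/
theorem shifted_fractional_independent_set
    {V : Type*} [Fintype V] (G : SimpleGraph V) [DecidableRel G.Adj]
    (Δ : ℕ) (hΔ : 1 ≤ Δ) (hdeg : ∀ v, G.degree v ≤ Δ)
    (w : V → ℝ) (hw : ∀ v, 0 ≤ w v)
    (x : V → ℝ) (hx0 : ∀ v, 0 ≤ x v) (hx1 : ∀ v, x v ≤ 1)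
    (ε : ℝ) (hε0 : 0 < ε) (hε1 : ε ≤ 1)
    (hsep : ∑ v, w v * x v ≥
      2 * ((∑ u, ∑ v, if G.Adj u v then min (w u) (w v) * x u * x v else 0) / 2))
    (x' : V → ℝ) (hx' : ∀ v, x' v = x v + ε / (2 * Δ)) :
    (∑ v, w v * x' v) -
        (∑ u, ∑ v, if G.Adj u v then min (w u) (w v) * x' u * x' v else 0) / 2 ≥
      (1 / 2 - ε / 2) * ∑ v, w v * x' v := by
  classical
  set δ : ℝ := ε / (2 * Δ) with hδdef
  have hΔR : (1:ℝ) ≤ (Δ:ℝ) := by exact_mod_cast hΔ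
  have hΔpos : (0:ℝ) < (Δ:ℝ) := by linarith
  have hδ0 : 0 ≤ δ := by positivity
  have hδΔ : δ * Δ = ε / 2 := by
    rw [hδdef, div_mul_eq_mul_div, div_eq_div_iff (by positivity) (by norm_num)]; ring
  set U : ℝ := ∑ v, w v * x v with hU
  set W : ℝ := ∑ v, w v with hW
  have hU0 : 0 ≤ U := Finset.sum_nonneg fun v _ => mul_nonneg (hw v) (hx0 v)
  have hW0 : 0 ≤ W := Finset.sum_nonneg fun v _ => hw v
  -- key bound
  have key : ∀ y : V → ℝ, (∀ v, 0 ≤ y v) →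
      (∑ u, ∑ v, if G.Adj u v then min (w u) (w v) * y u else 0)
        ≤ (Δ:ℝ) * ∑ v, w v * y v := by
    intro y hy
    have h1 : ∀ u, (∑ v, if G.Adj u v then min (w u) (w v) * y u else 0)
        ≤ (Δ:ℝ) * (w u * y u) := by
      intro u
      have h2 : (∑ v, if G.Adj u v then min (w u) (w v) * y u else 0)
          ≤ ∑ v, if G.Adj u v then w u * y u else 0 := by
        apply Finset.sum_le_sum
        intro v _
        split
        · exact mul_le_mul_of_nonneg_right (min_le_left _ _) (hy u)
        · exact le_rfl
      have h3 : (∑ v, if G.Adj u v then w u * y u else 0)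
          = (G.degree u : ℝ) * (w u * y u) := by
        rw [Finset.sum_ite, Finset.sum_const, Finset.sum_const_zero, add_zero,
          nsmul_eq_mul]
        congr 2
        rw [SimpleGraph.degree, ← SimpleGraph.neighborFinset_eq_filter]
      have h4 : (G.degree u : ℝ) * (w u * y u) ≤ (Δ:ℝ) * (w u * y u) := by
        apply mul_le_mul_of_nonneg_right _ (mul_nonneg (hw u) (hy u))
        exact_mod_cast hdeg u
      calc _ ≤ _ := h2
        _ = _ := h3
        _ ≤ _ := h4
    calc (∑ u, ∑ v, if G.Adj u v then min (w u) (w v) * y u else 0)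
        ≤ ∑ u, (Δ:ℝ) * (w u * y u) := Finset.sum_le_sum fun u _ => h1 u
      _ = (Δ:ℝ) * ∑ v, w v * y v := by rw [Finset.mul_sum]
  set S0 : ℝ := ∑ u, ∑ v, if G.Adj u v then min (w u) (w v) * x u * x v else 0 with hS0
  set S1 : ℝ := ∑ u, ∑ v, if G.Adj u v then min (w u) (w v) * x u else 0 with hS1
  set S1' : ℝ := ∑ u, ∑ v, if G.Adj u v then min (w u) (w v) * x v else 0 with hS1'
  set S2 : ℝ := ∑ u, ∑ v, if G.Adj u v then min (w u) (w v) else 0 with hS2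
  have hb1 : S1 ≤ (Δ:ℝ) * U := key x hx0
  have hb1' : S1' ≤ (Δ:ℝ) * U := by
    have hswap : S1' = ∑ u, ∑ v, if G.Adj u v then min (w u) (w v) * x u else 0 := by
      rw [hS1', Finset.sum_comm]
      apply Finset.sum_congr rfl; intro u _
      apply Finset.sum_congr rfl; intro v _
      exact if_congr (G.adj_comm _ _) (by rw [min_comm]) rfl
    rw [hswap]; exact key x hx0
  have hb2 : S2 ≤ (Δ:ℝ) * W := by
    have := key (fun _ => 1) (fun _ => zero_le_one)
    simpa using this
  have hsep' : S0 ≤ U := by linarith [hsep]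
  have hS00 : 0 ≤ S0 := by
    apply Finset.sum_nonneg; intro u _
    apply Finset.sum_nonneg; intro v _
    split
    · exact mul_nonneg (mul_nonneg (le_min (hw u) (hw v)) (hx0 u)) (hx0 v)
    · exact le_rfl
  have hU' : ∑ v, w v * x' v = U + δ * W := by
    simp only [hx']
    rw [hU, hW, Finset.mul_sum, ← Finset.sum_add_distrib]
    apply Finset.sum_congr rfl; intro v _; ring
  have hC' : (∑ u, ∑ v, if G.Adj u v then min (w u) (w v) * x' u * x' v else 0)
      = S0 + δ * S1 + δ * S1' + δ^2 * S2 := by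
    have expand : ∀ u v, (if G.Adj u v then min (w u) (w v) * x' u * x' v else 0)
        = (if G.Adj u v then min (w u) (w v) * x u * x v else 0)
          + δ * (if G.Adj u v then min (w u) (w v) * x u else 0)
          + δ * (if G.Adj u v then min (w u) (w v) * x v else 0)
          + δ^2 * (if G.Adj u v then min (w u) (w v) else 0) := by
      intro u v
      split
      · rw [hx' u, hx' v]; ring
      · ring
    simp only [expand, Finset.sum_add_distrib, ← Finset.mul_sum]
    rfl
  rw [hU', hC']
  nlinarith [mul_le_mul_of_nonneg_left hb1 hδ0, mul_le_mul_of_nonneg_left hb1' hδ0,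
    mul_le_mul_of_nonneg_left hb2 (mul_nonneg hδ0 hδ0),
    mul_nonneg hδ0 hW0, mul_nonneg (mul_nonneg hδ0 hδ0) hW0,
    mul_nonneg hε0.le (mul_nonneg hδ0 hW0), hδΔ, sq_nonneg δ]
end

section
/- Let G = (V,E) be a finite simple graph with vertex weights w : V → ℝ≥0, and let x : V → ℝ≥0 satisfy Σ_{u∈N⁺(v)} x_u ≤ 1 for every vertex v, where N⁺(v) = {v} ∪ N(v) is the closed neighborhood of v. Then Σ_{{u,v}∈E} min{w(u), w(v)}·x_u·x_v ≤ (1/2)·Σ_{v∈V} w(v)·x_v. -/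
open Finset

/-- Every feasible solution of the fractional independent set LP
(closed-neighborhood constraints) has edge cost at most half its utility.
Edge sums count each unordered edge once (half the ordered adjacency sum). -/
theorem lp_feasible_cost_le_half_utility
    {V : Type*} [Fintype V] (G : SimpleGraph V) [DecidableRel G.Adj]
    (w : V → ℝ) (hw : ∀ v, 0 ≤ w v)
    (x : V → ℝ) (hx0 : ∀ v, 0 ≤ x v)
    (hfeas : ∀ v, x v + ∑ u ∈ G.neighborFinset v, x u ≤ 1) :
    (∑ u, ∑ v, if G.Adj u v then min (w u) (w v) * x u * x v else 0) / 2 ≤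
      (1 / 2) * ∑ v, w v * x v := by
  rw [div_eq_mul_inv, mul_comm, ← one_div]
  apply mul_le_mul_of_nonneg_left _ (by norm_num : (0:ℝ) ≤ 1/2)
  apply Finset.sum_le_sum
  intro u _
  have h1 : (∑ v, if G.Adj u v then min (w u) (w v) * x u * x v else 0)
      = ∑ v ∈ G.neighborFinset u, min (w u) (w v) * x u * x v := by
    rw [← Finset.sum_filter]
    apply Finset.sum_congr _ (fun _ _ => rfl)
    ext v
    simp [SimpleGraph.mem_neighborFinset]
  rw [h1]
  have h2 : ∑ v ∈ G.neighborFinset u, min (w u) (w v) * x u * x v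
      ≤ ∑ v ∈ G.neighborFinset u, w u * x u * x v := by
    apply Finset.sum_le_sum
    intro v _
    apply mul_le_mul_of_nonneg_right _ (hx0 v)
    exact mul_le_mul_of_nonneg_right (min_le_left _ _) (hx0 u)
  refine h2.trans ?_
  rw [← Finset.mul_sum]
  have hsum : ∑ v ∈ G.neighborFinset u, x v ≤ 1 - x u := by
    have := hfeas u; linarith
  calc w u * x u * ∑ v ∈ G.neighborFinset u, x v
      ≤ w u * x u * 1 := by
        apply mul_le_mul_of_nonneg_left _ (mul_nonneg (hw u) (hx0 u))
        exact hsum.trans (by linarith [hx0 u])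
    _ = w u * x u := mul_one _
end

section
/- Let G = (V,E) be a finite simple graph with vertex weights w : V → ℝ≥0 and neighborhood independence at most β ≥ 1, i.e., for every vertex v, every independent subset of N(v) has size at most β. Then for every independent set I of G: Σ_{v∈I} w(v) ≤ β · S*(w), where S*(w) is the supremum of Σ_{v∈V} w(v)·x_v over all x : V → ℝ≥0 satisfying Σ_{u∈N⁺(v)} x_u ≤ 1 for every vertex v (with N⁺(v) = {v} ∪ N(v)). -/
open Finset

/-- Optimal value `S*(w)` of the fractional independent set relaxation with
closed-neighborhood constraints `Σ_{u ∈ N⁺(v)} x_u ≤ 1`. -/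
noncomputable def LPopt {V : Type*} [Fintype V] (G : SimpleGraph V)
    [DecidableRel G.Adj] (w : V → ℝ) : ℝ :=
  sSup {t : ℝ | ∃ x : V → ℝ, (∀ v, 0 ≤ x v) ∧
    (∀ v, x v + ∑ u ∈ G.neighborFinset v, x u ≤ 1) ∧ t = ∑ v, w v * x v}

/-- In a graph of neighborhood independence at most `β`, every
independent set has weight at most `β · S*(w)`. -/
theorem independent_set_le_beta_LPopt
    {V : Type*} [Fintype V] [DecidableEq V] (G : SimpleGraph V) [DecidableRel G.Adj]
    (w : V → ℝ) (hw : ∀ v, 0 ≤ w v)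
    (β : ℕ) (hβ : 1 ≤ β)
    (hni : ∀ v : V, ∀ A ⊆ G.neighborFinset v,
      (∀ a ∈ A, ∀ b ∈ A, ¬ G.Adj a b) → A.card ≤ β)
    (I : Finset V) (hI : ∀ u ∈ I, ∀ v ∈ I, ¬ G.Adj u v) :
    ∑ v ∈ I, w v ≤ (β : ℝ) * LPopt G w := by
  have hβpos : (0 : ℝ) < β := by exact_mod_cast hβ
  set S : Set ℝ := {t : ℝ | ∃ x : V → ℝ, (∀ v, 0 ≤ x v) ∧
    (∀ v, x v + ∑ u ∈ G.neighborFinset v, x u ≤ 1) ∧ t = ∑ v, w v * x v} with hS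
  -- bounded above
  have hbdd : BddAbove S := by
    refine ⟨∑ v, w v, ?_⟩
    rintro t ⟨x, hx0, hx1, rfl⟩
    apply Finset.sum_le_sum
    intro v _
    have hxle : x v ≤ 1 := by
      have := hx1 v
      have hs : 0 ≤ ∑ u ∈ G.neighborFinset v, x u :=
        Finset.sum_nonneg fun u _ => hx0 u
      linarith
    calc w v * x v ≤ w v * 1 := by
          exact mul_le_mul_of_nonneg_left hxle (hw v)
      _ = w v := mul_one _
  -- the candidate feasible solution
  set x : V → ℝ := fun v => if v ∈ I then 1 / β else 0 with hxdef
  have hx0 : ∀ v, 0 ≤ x v := by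
    intro v; simp only [hxdef]
    split <;> positivity
  have hsum : ∀ v : V, ∑ u ∈ G.neighborFinset v, x u =
      ((G.neighborFinset v ∩ I).card : ℝ) / β := by
    intro v
    simp only [hxdef]
    rw [Finset.sum_ite_mem, Finset.sum_const, nsmul_eq_mul]
    ring
  have hx1 : ∀ v, x v + ∑ u ∈ G.neighborFinset v, x u ≤ 1 := by
    intro v
    rw [hsum v]
    by_cases hv : v ∈ I
    · have hemp : G.neighborFinset v ∩ I = ∅ := by
        ext u
        simp only [Finset.mem_inter, Finset.notMem_empty, iff_false, not_and,
          SimpleGraph.mem_neighborFinset]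
        intro hadj hu
        exact hI v hv u hu hadj
      simp only [hxdef, if_pos hv, hemp, Finset.card_empty, Nat.cast_zero, zero_div, add_zero]
      rw [div_le_one hβpos]
      exact_mod_cast hβ
    · have hcard : (G.neighborFinset v ∩ I).card ≤ β := by
        apply hni v _ (Finset.inter_subset_left)
        intro a ha b hb
        exact hI a (Finset.mem_inter.mp ha).2 b (Finset.mem_inter.mp hb).2
      simp only [hxdef, if_neg hv, zero_add]
      rw [div_le_one hβpos]
      exact_mod_cast hcard
  have hval : ∑ v, w v * x v = (∑ v ∈ I, w v) / β := by
    simp only [hxdef, mul_ite, mul_zero, Finset.sum_ite_mem, Finset.univ_inter]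
    rw [Finset.sum_div]
    exact Finset.sum_congr rfl fun v _ => by ring
  have hmem : (∑ v ∈ I, w v) / β ∈ S := ⟨x, hx0, hx1, hval.symm⟩
  have hle : (∑ v ∈ I, w v) / β ≤ LPopt G w := le_csSup hbdd hmem
  calc ∑ v ∈ I, w v = (β : ℝ) * ((∑ v ∈ I, w v) / β) := by
        field_simp
    _ ≤ (β : ℝ) * LPopt G w := by
        exact mul_le_mul_of_nonneg_left hle (le_of_lt hβpos)
end

section
/- Let G = (V,E) be a finite simple graph with vertex weights w : V → ℝ≥0. Let I_1,…,I_T be independent sets and define weight functions w_1 := w and, for i = 1,…,T, w_{i+1}(u) := max{0, w_i(u) − Σ_{v∈N⁺(u)∩I_i} w_i(v)} for all u ∈ V, where N⁺(u) = {u} ∪ N(u). Assume w_i(v) > 0 for every v ∈ I_i and every i. Then there exists an independent set I ⊆ I_1 ∪ … ∪ I_T of G with Σ_{v∈I} w(v) ≥ Σ_{i=1}^{T} Σ_{v∈I_i} w_i(v). -/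
open Finset

/-- Combining lemma of the local-ratio scheme: given independent sets
`I_1, …, I_T` and residual weights `W_i` (with `W_1 = w` and
`W_{i+1}(u) = max{0, W_i(u) − Σ_{v ∈ N⁺(u) ∩ I_i} W_i(v)}`), where each selected
vertex has positive residual weight, there is a single independent set
`J ⊆ I_1 ∪ … ∪ I_T` of original weight at least `Σ_i Σ_{v ∈ I_i} W_i(v)`. -/
theorem local_ratio_combining
    {V : Type*} [Fintype V] [DecidableEq V] (G : SimpleGraph V) [DecidableRel G.Adj]
    (w : V → ℝ) (hw : ∀ v, 0 ≤ w v) (T : ℕ)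
    (I : ℕ → Finset V)
    (hind : ∀ i ∈ Finset.Icc 1 T, ∀ u ∈ I i, ∀ v ∈ I i, ¬ G.Adj u v)
    (W : ℕ → V → ℝ) (hW1 : ∀ v, W 1 v = w v)
    (hWstep : ∀ i ∈ Finset.Icc 1 T, ∀ u : V,
      W (i + 1) u =
        max 0 (W i u - ∑ v ∈ (insert u (G.neighborFinset u)) ∩ I i, W i v))
    (hpos : ∀ i ∈ Finset.Icc 1 T, ∀ v ∈ I i, 0 < W i v) :
    ∃ J : Finset V, J ⊆ (Finset.Icc 1 T).biUnion I ∧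
      (∀ u ∈ J, ∀ v ∈ J, ¬ G.Adj u v) ∧
      ∑ v ∈ J, w v ≥ ∑ i ∈ Finset.Icc 1 T, ∑ v ∈ I i, W i v := by
  classical
  -- nonnegativity of residual weights
  have Wnn : ∀ i, 1 ≤ i → i ≤ T + 1 → ∀ v, 0 ≤ W i v := by
    intro i h1 h2 v
    rcases Nat.exists_eq_add_of_le h1 with ⟨j, rfl⟩
    cases j with
    | zero => rw [hW1]; exact hw v
    | succ j =>
      have heq : (1 : ℕ) + (j + 1) = (1 + j) + 1 := by ring
      rw [heq, hWstep (1 + j) (by simp only [Finset.mem_Icc]; omega)]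
      exact le_max_left _ _
  have Wmono : ∀ i, 1 ≤ i → i ≤ T → ∀ v, W (i + 1) v ≤ W i v := by
    intro i h1 h2 v
    rw [hWstep i (by simp only [Finset.mem_Icc]; omega)]
    have hnn : 0 ≤ W i v := Wnn i h1 (by omega) v
    have hs : 0 ≤ ∑ x ∈ (insert v (G.neighborFinset v)) ∩ I i, W i x :=
      Finset.sum_nonneg fun x _ => Wnn i h1 (by omega) x
    exact max_le hnn (by linarith)
  have Wchain : ∀ a b, 1 ≤ a → a ≤ b → b ≤ T + 1 → ∀ v, W b v ≤ W a v := by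
    intro a b ha hab
    induction b, hab using Nat.le_induction with
    | base => intro _ v; exact le_rfl
    | succ b hb ih =>
      intro hb1 v
      have h1 : W b v ≤ W a v := ih (by omega) v
      have h2 : W (b + 1) v ≤ W b v := Wmono b (by omega) (by omega) v
      linarith
  have key : ∀ m k : ℕ, 1 ≤ k → k + m = T + 1 →
      ∃ J : Finset V, J ⊆ (Finset.Icc k T).biUnion I ∧
        (∀ u ∈ J, ∀ v ∈ J, ¬ G.Adj u v) ∧ (∀ v ∈ J, 0 < W k v) ∧
        ∑ v ∈ J, W k v ≥ ∑ i ∈ Finset.Icc k T, ∑ v ∈ I i, W i v := by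
    intro m
    induction m with
    | zero =>
      intro k hk hkT
      refine ⟨∅, by simp, by simp, by simp, ?_⟩
      have hempty : Finset.Icc k T = ∅ := Finset.Icc_eq_empty (by omega)
      simp [hempty]
    | succ m ih =>
      intro k hk hkT
      obtain ⟨J', hJ'sub, hJ'ind, hJ'pos, hJ'sum⟩ := ih (k + 1) (by omega) (by omega)
      have hkT' : k ≤ T := by omega
      have hkmem : k ∈ Finset.Icc 1 T := by simp only [Finset.mem_Icc]; omega
      set A := (I k).filter (fun v => ∀ u ∈ J', u ∉ insert v (G.neighborFinset v)) with hA
      have hAI : A ⊆ I k := Finset.filter_subset _ _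
      have hdisj : Disjoint A J' := by
        rw [Finset.disjoint_left]
        intro v hv hv'
        have := (Finset.mem_filter.mp hv).2 v hv'
        exact this (Finset.mem_insert_self _ _)
      refine ⟨A ∪ J', ?_, ?_, ?_, ?_⟩
      · intro x hx
        rcases Finset.mem_union.mp hx with h | h
        · exact Finset.mem_biUnion.mpr ⟨k, Finset.mem_Icc.mpr ⟨le_rfl, hkT'⟩, hAI h⟩
        · obtain ⟨i, hi, hxi⟩ := Finset.mem_biUnion.mp (hJ'sub h)
          refine Finset.mem_biUnion.mpr ⟨i, ?_, hxi⟩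
          simp only [Finset.mem_Icc] at hi ⊢; omega
      · intro u hu v hv
        rcases Finset.mem_union.mp hu with hu | hu <;> rcases Finset.mem_union.mp hv with hv | hv
        · exact hind k hkmem u (hAI hu) v (hAI hv)
        · intro hadj
          exact (Finset.mem_filter.mp hu).2 v hv
            (Finset.mem_insert_of_mem (by rwa [SimpleGraph.mem_neighborFinset]))
        · intro hadj
          exact (Finset.mem_filter.mp hv).2 u hu
            (Finset.mem_insert_of_mem
              (by rw [SimpleGraph.mem_neighborFinset]; exact hadj.symm))
        · exact hJ'ind u hu v hv
      · intro v hv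
        rcases Finset.mem_union.mp hv with hv | hv
        · exact hpos k hkmem v (hAI hv)
        · exact lt_of_lt_of_le (hJ'pos v hv) (Wmono k (by omega) hkT' v)
      · -- the weight inequality
        have hstep : ∀ v ∈ J',
            W k v = W (k + 1) v + ∑ x ∈ (insert v (G.neighborFinset v)) ∩ I k, W k x := by
          intro v hv
          have hp := hJ'pos v hv
          have heq := hWstep k hkmem v
          rcases max_cases (0 : ℝ)
              (W k v - ∑ x ∈ (insert v (G.neighborFinset v)) ∩ I k, W k x) with
            ⟨h1, h2⟩ | ⟨h1, h2⟩
          · rw [heq, h1] at hp; exact absurd hp (lt_irrefl 0)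
          · rw [heq, h1]; ring
        have hsum1 : ∑ v ∈ J', W k v =
            ∑ v ∈ J', W (k + 1) v +
              ∑ v ∈ J', ∑ x ∈ (insert v (G.neighborFinset v)) ∩ I k, W k x := by
          rw [← Finset.sum_add_distrib]
          exact Finset.sum_congr rfl hstep
        -- double counting bound
        have hWknn : ∀ x, 0 ≤ W k x := fun x => Wnn k (by omega) (by omega) x
        have hcount : ∑ x ∈ I k \ A, W k x ≤
            ∑ v ∈ J', ∑ x ∈ (insert v (G.neighborFinset v)) ∩ I k, W k x := by
          have hrw : ∀ v, ∑ x ∈ (insert v (G.neighborFinset v)) ∩ I k, W k x =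
              ∑ x ∈ I k, if x ∈ insert v (G.neighborFinset v) then W k x else 0 := by
            intro v
            rw [Finset.sum_ite_mem, Finset.inter_comm]
          calc ∑ x ∈ I k \ A, W k x
              ≤ ∑ x ∈ I k \ A, ∑ v ∈ J',
                  (if x ∈ insert v (G.neighborFinset v) then W k x else 0) := by
                apply Finset.sum_le_sum
                intro x hx
                obtain ⟨hxI, hxA⟩ := Finset.mem_sdiff.mp hx
                have : ¬ ∀ u ∈ J', u ∉ insert x (G.neighborFinset x) := by
                  intro h; exact hxA (Finset.mem_filter.mpr ⟨hxI, h⟩)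
                push_neg at this
                obtain ⟨u, hu, hux⟩ := this
                have hxu : x ∈ insert u (G.neighborFinset u) := by
                  rcases Finset.mem_insert.mp hux with h | h
                  · rw [h]; exact Finset.mem_insert_self _ _
                  · exact Finset.mem_insert_of_mem
                      (by rw [SimpleGraph.mem_neighborFinset] at h ⊢; exact h.symm)
                have := Finset.single_le_sum
                  (f := fun v => if x ∈ insert v (G.neighborFinset v) then W k x else 0)
                  (fun v _ => by split_ifs; exacts [hWknn x, le_rfl]) hu
                simpa [hxu] using this
            _ ≤ ∑ x ∈ I k, ∑ v ∈ J',
                  (if x ∈ insert v (G.neighborFinset v) then W k x else 0) := by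
                apply Finset.sum_le_sum_of_subset_of_nonneg (Finset.sdiff_subset)
                intro x _ _
                exact Finset.sum_nonneg fun v _ => by split_ifs; exacts [hWknn x, le_rfl]
            _ = ∑ v ∈ J', ∑ x ∈ (insert v (G.neighborFinset v)) ∩ I k, W k x := by
                rw [Finset.sum_comm]
                exact Finset.sum_congr rfl fun v _ => (hrw v).symm
        have hsdiff : ∑ x ∈ I k \ A, W k x + ∑ x ∈ A, W k x = ∑ x ∈ I k, W k x :=
          Finset.sum_sdiff hAI
        have hsplit : ∑ i ∈ Finset.Icc k T, ∑ v ∈ I i, W i v =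
            ∑ v ∈ I k, W k v + ∑ i ∈ Finset.Icc (k + 1) T, ∑ v ∈ I i, W i v := by
          have h1 : Finset.Icc k T = insert k (Finset.Icc (k + 1) T) := by
            rw [Finset.Icc_add_one_left_eq_Ioc, Finset.Ioc_insert_left hkT']
          rw [h1, Finset.sum_insert (by simp only [Finset.mem_Icc]; omega)]
        rw [Finset.sum_union hdisj, hsum1, hsplit]
        have := hJ'sum
        linarith
  obtain ⟨J, hsub, hindJ, _, hsum⟩ := key T 1 le_rfl (by omega)
  refine ⟨J, hsub, hindJ, ?_⟩
  calc ∑ v ∈ J, w v = ∑ v ∈ J, W 1 v := Finset.sum_congr rfl fun v _ => (hW1 v).symm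
    _ ≥ ∑ i ∈ Finset.Icc 1 T, ∑ v ∈ I i, W i v := hsum
end

section
/- Let G = (V,E) be a finite simple graph with vertex weights w : V → ℝ≥0 and let I be an independent set of G. Define w′(u) := min{ w(u), Σ_{v∈N⁺(u)∩I} w(v) } for every u ∈ V, where N⁺(u) = {u} ∪ N(u). Then for every x : V → ℝ≥0 satisfying Σ_{u∈N⁺(v)} x_u ≤ 1 for all v ∈ V, we have Σ_{v∈V} w′(v)·x_v ≤ Σ_{v∈I} w(v). -/
open Finset

/-- The LP value of the reduced weights
`w′(u) = min{w(u), Σ_{v ∈ N⁺(u) ∩ I} w(v)}` of one local-ratio step is at most the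
weight of the independent set `I`: every feasible LP solution `x` satisfies
`Σ_v w′(v)·x_v ≤ Σ_{v ∈ I} w(v)`. -/
theorem local_ratio_reduced_weight_LP_bound
    {V : Type*} [Fintype V] [DecidableEq V] (G : SimpleGraph V) [DecidableRel G.Adj]
    (w : V → ℝ) (hw : ∀ v, 0 ≤ w v)
    (I : Finset V) (hI : ∀ u ∈ I, ∀ v ∈ I, ¬ G.Adj u v)
    (x : V → ℝ) (hx0 : ∀ v, 0 ≤ x v)
    (hfeas : ∀ v, x v + ∑ u ∈ G.neighborFinset v, x u ≤ 1) :
    ∑ v, (min (w v) (∑ u ∈ (insert v (G.neighborFinset v)) ∩ I, w u)) * x v ≤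
      ∑ v ∈ I, w v := by
  have step1 : ∑ v, (min (w v) (∑ u ∈ (insert v (G.neighborFinset v)) ∩ I, w u)) * x v ≤
      ∑ v, (∑ u ∈ I, if u ∈ insert v (G.neighborFinset v) then w u else 0) * x v := by
    apply Finset.sum_le_sum
    intro v _
    apply mul_le_mul_of_nonneg_right _ (hx0 v)
    refine le_trans (min_le_right _ _) (le_of_eq ?_)
    rw [Finset.sum_ite_mem, Finset.inter_comm]
  refine step1.trans ?_
  simp_rw [Finset.sum_mul]
  rw [Finset.sum_comm]
  calc ∑ u ∈ I, ∑ v, (if u ∈ insert v (G.neighborFinset v) then w u else 0) * x v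
        ≤ ∑ u ∈ I, w u * 1 := by
          apply Finset.sum_le_sum
          intro u hu
          have key : ∀ v : V, (u ∈ insert v (G.neighborFinset v)) ↔
              (v ∈ insert u (G.neighborFinset u)) := by
            intro v
            simp only [Finset.mem_insert, SimpleGraph.mem_neighborFinset]
            constructor
            · rintro (h | h)
              · exact Or.inl h.symm
              · exact Or.inr h.symm
            · rintro (h | h)
              · exact Or.inl h.symm
              · exact Or.inr h.symm
          have : ∑ v, (if u ∈ insert v (G.neighborFinset v) then w u else 0) * x v
              = w u * ∑ v ∈ insert u (G.neighborFinset u), x v := by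
            rw [Finset.mul_sum]
            rw [← Finset.sum_filter_add_sum_filter_not Finset.univ
              (fun v => v ∈ insert u (G.neighborFinset u))]
            have h1 : ∑ v ∈ Finset.univ.filter (fun v => v ∈ insert u (G.neighborFinset u)),
                (if u ∈ insert v (G.neighborFinset v) then w u else 0) * x v
                = ∑ v ∈ insert u (G.neighborFinset u), w u * x v := by
              rw [Finset.filter_mem_eq_inter, Finset.univ_inter]
              apply Finset.sum_congr rfl
              intro v hv
              rw [if_pos ((key v).mpr hv)]
            have h2 : ∑ v ∈ Finset.univ.filter (fun v => v ∉ insert u (G.neighborFinset u)),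
                (if u ∈ insert v (G.neighborFinset v) then w u else 0) * x v = 0 := by
              apply Finset.sum_eq_zero
              intro v hv
              rw [Finset.mem_filter] at hv
              rw [if_neg (fun h => hv.2 ((key v).mp h)), zero_mul]
            rw [h1, h2, add_zero]
          rw [this]
          apply mul_le_mul_of_nonneg_left _ (hw u)
          rw [Finset.sum_insert (by simp [SimpleGraph.irrefl])]
          exact hfeas u
      _ = ∑ u ∈ I, w u := by simp
end

section
/- Let G = (V,E) be a finite simple graph with vertex weights w : V → ℝ≥0, let ρ ∈ (0,1) and ε ∈ (0,1), and let T be an integer with T ≥ ln(1/ε)/ρ. Let I_1,…,I_T be independent sets with associated weights w_1 := w and w_{i+1}(u) := max{0, w_i(u) − Σ_{v∈N⁺(u)∩I_i} w_i(v)}, such that w_i(v) > 0 for every v ∈ I_i, and such that Σ_{v∈I_i} w_i(v) ≥ ρ·S*(w_i) for every i, where S*(w′) denotes the supremum of Σ_{v∈V} w′(v)·x_v over all x : V → ℝ≥0 with Σ_{u∈N⁺(v)} x_u ≤ 1 for every v. Then there exists an independent set I of G with Σ_{v∈I} w(v) ≥ (1 − ε)·S*(w). -/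
open Finset

section Aux

variable {V : Type*} [Fintype V] (G : SimpleGraph V) [DecidableRel G.Adj]

lemma lp_zero_mem (w : V → ℝ) : (0:ℝ) ∈ {t : ℝ | ∃ x : V → ℝ, (∀ v, 0 ≤ x v) ∧
    (∀ v, x v + ∑ u ∈ G.neighborFinset v, x u ≤ 1) ∧ t = ∑ v, w v * x v} :=
  ⟨fun _ => 0, fun _ => le_rfl, fun v => by simp, by simp⟩

lemma lp_bdd (w : V → ℝ) : BddAbove {t : ℝ | ∃ x : V → ℝ, (∀ v, 0 ≤ x v) ∧
    (∀ v, x v + ∑ u ∈ G.neighborFinset v, x u ≤ 1) ∧ t = ∑ v, w v * x v} := by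
  refine ⟨∑ v, |w v|, ?_⟩
  rintro t ⟨x, hx0, hx1, rfl⟩
  apply Finset.sum_le_sum
  intro v _
  have hxle : x v ≤ 1 :=
    le_trans (le_add_of_nonneg_right (Finset.sum_nonneg fun u _ => hx0 u)) (hx1 v)
  calc w v * x v ≤ |w v| * x v := mul_le_mul_of_nonneg_right (le_abs_self _) (hx0 v)
    _ ≤ |w v| * 1 := mul_le_mul_of_nonneg_left hxle (abs_nonneg _)
    _ = |w v| := mul_one _

lemma LPopt_nonneg (w : V → ℝ) : 0 ≤ LPopt G w :=
  le_csSup (lp_bdd G w) (lp_zero_mem G w)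

lemma LPopt_descent [DecidableEq V] (w1 w2 : V → ℝ) (s : Finset V)
    (hs : ∀ v ∈ s, 0 ≤ w1 v)
    (h2 : ∀ u, w1 u - ∑ v ∈ (insert u (G.neighborFinset u)) ∩ s, w1 v ≤ w2 u) :
    LPopt G w1 ≤ LPopt G w2 + ∑ v ∈ s, w1 v := by
  apply csSup_le ⟨0, lp_zero_mem G w1⟩
  rintro t ⟨x, hx0, hx1, rfl⟩
  have setEq : ∀ u : V, (insert u (G.neighborFinset u)) ∩ s
      = s.filter (fun v => u ∈ insert v (G.neighborFinset v)) := by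
    intro u
    ext v
    simp only [Finset.mem_inter, Finset.mem_insert, Finset.mem_filter,
      SimpleGraph.mem_neighborFinset]
    constructor
    · rintro ⟨h1, h2⟩
      refine ⟨h2, ?_⟩
      rcases h1 with h | h
      · exact Or.inl h.symm
      · exact Or.inr (G.adj_comm u v |>.mp h)
    · rintro ⟨h1, h2⟩
      refine ⟨?_, h1⟩
      rcases h2 with h | h
      · exact Or.inl h.symm
      · exact Or.inr (G.adj_comm v u |>.mp h)
  have swap : ∑ u, (∑ v ∈ (insert u (G.neighborFinset u)) ∩ s, w1 v) * x u
      = ∑ v ∈ s, w1 v * ∑ u ∈ insert v (G.neighborFinset v), x u := by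
    calc ∑ u, (∑ v ∈ (insert u (G.neighborFinset u)) ∩ s, w1 v) * x u
        = ∑ u, ∑ v ∈ s, (if u ∈ insert v (G.neighborFinset v) then w1 v * x u else 0) := by
          refine Finset.sum_congr rfl fun u _ => ?_
          rw [setEq, Finset.sum_mul, Finset.sum_filter]
      _ = ∑ v ∈ s, ∑ u : V, (if u ∈ insert v (G.neighborFinset v) then w1 v * x u else 0) :=
          Finset.sum_comm
      _ = ∑ v ∈ s, w1 v * ∑ u ∈ insert v (G.neighborFinset v), x u := by
          refine Finset.sum_congr rfl fun v _ => ?_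
          rw [Finset.sum_ite_mem, Finset.univ_inter, Finset.mul_sum]
  have bound : ∑ v ∈ s, w1 v * ∑ u ∈ insert v (G.neighborFinset v), x u ≤ ∑ v ∈ s, w1 v := by
    refine Finset.sum_le_sum fun v hv => ?_
    have hvn : v ∉ G.neighborFinset v := by
      simp [SimpleGraph.mem_neighborFinset]
    rw [Finset.sum_insert hvn]
    calc w1 v * (x v + ∑ u ∈ G.neighborFinset v, x u) ≤ w1 v * 1 :=
          mul_le_mul_of_nonneg_left (hx1 v) (hs v hv)
      _ = w1 v := mul_one _
  have h3 : ∑ u, (w1 u - ∑ v ∈ (insert u (G.neighborFinset u)) ∩ s, w1 v) * x u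
      ≤ ∑ u, w2 u * x u :=
    Finset.sum_le_sum fun u _ => mul_le_mul_of_nonneg_right (h2 u) (hx0 u)
  have expand : ∑ u, (w1 u - ∑ v ∈ (insert u (G.neighborFinset u)) ∩ s, w1 v) * x u
      = ∑ u, w1 u * x u - ∑ u, (∑ v ∈ (insert u (G.neighborFinset u)) ∩ s, w1 v) * x u := by
    rw [← Finset.sum_sub_distrib]
    exact Finset.sum_congr rfl fun u _ => by ring
  have hmem : ∑ u, w2 u * x u ≤ LPopt G w2 :=
    le_csSup (lp_bdd G w2) ⟨x, hx0, hx1, rfl⟩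
  rw [expand, swap] at h3
  linarith

lemma sum_biUnion_le' {α β : Type*} [DecidableEq β] (t : Finset α) (g : α → Finset β)
    (f : β → ℝ) (hf : ∀ b, 0 ≤ f b) :
    ∑ b ∈ t.biUnion g, f b ≤ ∑ a ∈ t, ∑ b ∈ g a, f b := by
  classical
  induction t using Finset.induction_on with
  | empty => simp
  | @insert a s ha ih =>
    rw [Finset.biUnion_insert, Finset.sum_insert ha]
    have h1 : ∑ b ∈ g a ∪ s.biUnion g, f b + ∑ b ∈ g a ∩ s.biUnion g, f b
        = ∑ b ∈ g a, f b + ∑ b ∈ s.biUnion g, f b := Finset.sum_union_inter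
    have h2 : 0 ≤ ∑ b ∈ g a ∩ s.biUnion g, f b := Finset.sum_nonneg fun b _ => hf b
    linarith

end Aux

/-- Reverse-greedy combination: process `I T, I (T-1), …`, each time adding the
vertices not in conflict with what has been kept so far. -/
def revG {V : Type*} [DecidableEq V] (G : SimpleGraph V) [DecidableRel G.Adj]
    (I : ℕ → Finset V) (T : ℕ) : ℕ → Finset V
  | 0 => ∅
  | k+1 => revG G I T k ∪ (I (T - k)).filter
      (fun v => ∀ u ∈ revG G I T k, v ≠ u ∧ ¬ G.Adj v u)

/-- Boosting lemma of the local-ratio scheme: if each selected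
independent set `I_i` captures at least a `ρ`-fraction of the current residual LP
optimum, then after `T ≥ ln(1/ε)/ρ` iterations there is an independent set of
weight at least `(1 − ε)·S*(w)`. -/
theorem local_ratio_boosting
    {V : Type*} [Fintype V] [DecidableEq V] (G : SimpleGraph V) [DecidableRel G.Adj]
    (w : V → ℝ) (hw : ∀ v, 0 ≤ w v)
    (ρ ε : ℝ) (hρ0 : 0 < ρ) (hρ1 : ρ < 1) (hε0 : 0 < ε) (hε1 : ε < 1)
    (T : ℕ) (hT : Real.log (1 / ε) / ρ ≤ (T : ℝ))
    (I : ℕ → Finset V)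
    (hind : ∀ i ∈ Finset.Icc 1 T, ∀ u ∈ I i, ∀ v ∈ I i, ¬ G.Adj u v)
    (W : ℕ → V → ℝ) (hW1 : ∀ v, W 1 v = w v)
    (hWstep : ∀ i ∈ Finset.Icc 1 T, ∀ u : V,
      W (i + 1) u =
        max 0 (W i u - ∑ v ∈ (insert u (G.neighborFinset u)) ∩ I i, W i v))
    (hpos : ∀ i ∈ Finset.Icc 1 T, ∀ v ∈ I i, 0 < W i v)
    (hfrac : ∀ i ∈ Finset.Icc 1 T, ∑ v ∈ I i, W i v ≥ ρ * LPopt G (W i)) :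
    ∃ J : Finset V, (∀ u ∈ J, ∀ v ∈ J, ¬ G.Adj u v) ∧
      ∑ v ∈ J, w v ≥ (1 - ε) * LPopt G w := by
  classical
  -- nonnegativity of the residual weights
  have hWnn : ∀ i, 1 ≤ i → i ≤ T + 1 → ∀ v, 0 ≤ W i v := by
    intro i h1 h2 v
    match i, h1 with
    | 1, _ => rw [hW1]; exact hw v
    | (n+2), _ =>
      rw [hWstep (n+1) (by simp [Finset.mem_Icc]; omega) v]
      exact le_max_left _ _
  have hWstep_le : ∀ i, 1 ≤ i → i ≤ T → ∀ v, W (i+1) v ≤ W i v := by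
    intro i h1 h2 v
    have hi : i ∈ Finset.Icc 1 T := by simp [Finset.mem_Icc]; omega
    rw [hWstep i hi v]
    have hd : 0 ≤ ∑ x ∈ (insert v (G.neighborFinset v)) ∩ I i, W i x :=
      Finset.sum_nonneg fun x hx =>
        (hpos i hi x (Finset.mem_of_mem_inter_right hx)).le
    have hv : 0 ≤ W i v := hWnn i h1 (by omega) v
    exact max_le hv (by linarith)
  have hWmono : ∀ i j, 1 ≤ i → i ≤ j → j ≤ T + 1 → ∀ v, W j v ≤ W i v := by
    intro i j h1 hij hj v
    induction j with
    | zero => omega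
    | succ n ih =>
      rcases Nat.eq_or_lt_of_le hij with h | h
      · rw [h]
      · exact le_trans (hWstep_le n (by omega) (by omega) v) (ih (by omega) (by omega))
  -- main reverse-greedy induction
  have main : ∀ k, k ≤ T →
      (∀ u ∈ revG G I T k, ∀ v ∈ revG G I T k, ¬ G.Adj u v) ∧
      (∀ u ∈ revG G I T k, ∃ j, T + 1 - k ≤ j ∧ j ≤ T ∧ u ∈ I j) ∧
      (∑ i ∈ Finset.Icc (T + 1 - k) T, ∑ v ∈ I i, W i v
        ≤ ∑ u ∈ revG G I T k, W (T + 1 - k) u) := by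
    intro k
    induction k with
    | zero =>
      intro _
      refine ⟨by simp [revG], by simp [revG], ?_⟩
      rw [Finset.Icc_eq_empty (by omega)]
      simp [revG]
    | succ k ih =>
      intro hk1
      obtain ⟨ha, hb, hc⟩ := ih (by omega)
      set i := T - k with hidef
      have hiIcc : i ∈ Finset.Icc 1 T := by simp [Finset.mem_Icc]; omega
      have hiT : T + 1 - k = i + 1 := by omega
      have hiT2 : T + 1 - (k+1) = i := by omega
      set Jn := revG G I T k with hJ
      have hrec : revG G I T (k+1)
          = Jn ∪ (I i).filter (fun v => ∀ u ∈ Jn, v ≠ u ∧ ¬ G.Adj v u) := by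
        rw [hJ, hidef, revG]
        congr
      set A := (I i).filter (fun v => ∀ u ∈ Jn, v ≠ u ∧ ¬ G.Adj v u) with hAdef
      have hdisj : Disjoint Jn A := by
        rw [Finset.disjoint_left]
        intro a haJ haA
        exact ((Finset.mem_filter.mp haA).2 a haJ).1 rfl
      have hAsub : A ⊆ I i := Finset.filter_subset _ _
      -- independence
      have indep : ∀ u ∈ revG G I T (k+1), ∀ v ∈ revG G I T (k+1), ¬ G.Adj u v := by
        rw [hrec]
        intro u hu v hv
        rcases Finset.mem_union.mp hu with hu | hu <;>
          rcases Finset.mem_union.mp hv with hv | hv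
        · exact ha u hu v hv
        · intro hadj
          exact ((Finset.mem_filter.mp hv).2 u hu).2 (G.adj_comm u v |>.mp hadj)
        · intro hadj
          exact ((Finset.mem_filter.mp hu).2 v hv).2 hadj
        · exact hind i hiIcc u (hAsub hu) v (hAsub hv)
      -- membership
      have memb : ∀ u ∈ revG G I T (k+1), ∃ j, T + 1 - (k+1) ≤ j ∧ j ≤ T ∧ u ∈ I j := by
        rw [hrec]
        intro u hu
        rcases Finset.mem_union.mp hu with hu | hu
        · obtain ⟨j, hj1, hj2, hj3⟩ := hb u hu
          exact ⟨j, by omega, hj2, hj3⟩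
        · exact ⟨i, by omega, by simp [Finset.mem_Icc] at hiIcc; omega, hAsub hu⟩
      refine ⟨indep, memb, ?_⟩
      rw [hrec, hiT2]
      rw [hiT] at hc hb
      -- key decomposition on Jn
      have key : ∀ u ∈ Jn,
          W i u = W (i+1) u + ∑ v ∈ (insert u (G.neighborFinset u)) ∩ I i, W i v := by
        intro u hu
        obtain ⟨j, hj1, hj2, hjI⟩ := hb u hu
        have hjpos : 0 < W j u := hpos j (by simp [Finset.mem_Icc]; omega) u hjI
        have hmon : W j u ≤ W (i+1) u := hWmono (i+1) j (by omega) hj1 (by omega) u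
        have hpos' : 0 < W (i+1) u := lt_of_lt_of_le hjpos hmon
        rw [hWstep i hiIcc u] at hpos' ⊢
        have hgt : 0 < W i u - ∑ v ∈ (insert u (G.neighborFinset u)) ∩ I i, W i v := by
          rcases lt_max_iff.mp hpos' with h | h
          · exact absurd h (lt_irrefl 0)
          · exact h
        rw [max_eq_right hgt.le]
        ring
      have sumJn : ∑ u ∈ Jn, W i u
          = ∑ u ∈ Jn, W (i+1) u
            + ∑ u ∈ Jn, ∑ v ∈ (insert u (G.neighborFinset u)) ∩ I i, W i v := by
        rw [← Finset.sum_add_distrib]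
        exact Finset.sum_congr rfl key
      -- covering of the discarded part of I i
      have cover : I i \ A ⊆ Jn.biUnion (fun u => (insert u (G.neighborFinset u)) ∩ I i) := by
        intro v hv
        obtain ⟨hvI, hvA⟩ := Finset.mem_sdiff.mp hv
        have : ¬ ∀ u ∈ Jn, v ≠ u ∧ ¬ G.Adj v u := by
          intro hcon
          exact hvA (Finset.mem_filter.mpr ⟨hvI, hcon⟩)
        push_neg at this
        obtain ⟨u, huJ, hcon⟩ := this
        rw [Finset.mem_biUnion]
        refine ⟨u, huJ, Finset.mem_inter.mpr ⟨?_, hvI⟩⟩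
        by_cases hvu : v = u
        · rw [hvu]; exact Finset.mem_insert_self _ _
        · have hadj : G.Adj v u := hcon hvu
          exact Finset.mem_insert_of_mem
            (SimpleGraph.mem_neighborFinset _ _ _ |>.mpr (G.adj_comm v u |>.mp hadj))
      have hWinn : ∀ v : V, 0 ≤ W i v := hWnn i (by simp [Finset.mem_Icc] at hiIcc; omega)
        (by simp [Finset.mem_Icc] at hiIcc; omega)
      have hcover : ∑ v ∈ I i \ A, W i v
          ≤ ∑ u ∈ Jn, ∑ v ∈ (insert u (G.neighborFinset u)) ∩ I i, W i v := by
        calc ∑ v ∈ I i \ A, W i v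
            ≤ ∑ v ∈ Jn.biUnion (fun u => (insert u (G.neighborFinset u)) ∩ I i), W i v :=
              Finset.sum_le_sum_of_subset_of_nonneg cover (fun v _ _ => hWinn v)
          _ ≤ ∑ u ∈ Jn, ∑ v ∈ (insert u (G.neighborFinset u)) ∩ I i, W i v :=
              sum_biUnion_le' _ _ _ hWinn
      have hsplit : ∑ v ∈ I i \ A, W i v + ∑ v ∈ A, W i v = ∑ v ∈ I i, W i v :=
        Finset.sum_sdiff hAsub
      have hIcc : ∑ j ∈ Finset.Icc i T, ∑ v ∈ I j, W j v
          = ∑ v ∈ I i, W i v + ∑ j ∈ Finset.Icc (i+1) T, ∑ v ∈ I j, W j v := by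
        rw [Finset.Icc_add_one_left_eq_Ioc, ← Finset.Ioc_insert_left
          (by simp [Finset.mem_Icc] at hiIcc; omega : i ≤ T), Finset.sum_insert (by simp)]
      have hunion : ∑ u ∈ Jn ∪ A, W i u = ∑ u ∈ Jn, W i u + ∑ u ∈ A, W i u :=
        Finset.sum_union hdisj
      rw [hIcc, hunion, sumJn]
      linarith
  -- LP decay induction
  have hW1' : W 1 = w := funext hW1
  have decay : ∀ k, k ≤ T →
      LPopt G w - ∑ i ∈ Finset.Icc 1 k, ∑ v ∈ I i, W i v ≤ LPopt G (W (k+1)) ∧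
      LPopt G w - ∑ i ∈ Finset.Icc 1 k, ∑ v ∈ I i, W i v ≤ (1-ρ)^k * LPopt G w := by
    intro k
    induction k with
    | zero =>
      intro _
      rw [Finset.Icc_eq_empty (by omega)]
      simp [hW1']
    | succ k ih =>
      intro hk
      obtain ⟨d1, d2⟩ := ih (by omega)
      have hk1 : (k+1) ∈ Finset.Icc 1 T := by simp [Finset.mem_Icc]; omega
      have hsum : ∑ i ∈ Finset.Icc 1 (k+1), ∑ v ∈ I i, W i v
          = ∑ i ∈ Finset.Icc 1 k, ∑ v ∈ I i, W i v + ∑ v ∈ I (k+1), W (k+1) v :=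
        Finset.sum_Icc_succ_top (by omega) _
      have hdesc : LPopt G (W (k+1)) ≤ LPopt G (W (k+2)) + ∑ v ∈ I (k+1), W (k+1) v :=
        LPopt_descent G (W (k+1)) (W (k+2)) (I (k+1))
          (fun v hv => (hpos (k+1) hk1 v hv).le)
          (fun u => by rw [hWstep (k+1) hk1 u]; exact le_max_right _ _)
      have hf := hfrac (k+1) hk1
      constructor
      · rw [hsum]; linarith
      · rw [hsum]
        have e1 : ρ * (LPopt G w - ∑ i ∈ Finset.Icc 1 k, ∑ v ∈ I i, W i v)
            ≤ ρ * LPopt G (W (k+1)) := mul_le_mul_of_nonneg_left d1 hρ0.le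
        have e2 : (1-ρ) * (LPopt G w - ∑ i ∈ Finset.Icc 1 k, ∑ v ∈ I i, W i v)
            ≤ (1-ρ) * ((1-ρ)^k * LPopt G w) :=
          mul_le_mul_of_nonneg_left d2 (by linarith)
        have g1 : ρ * (LPopt G w - ∑ i ∈ Finset.Icc 1 k, ∑ v ∈ I i, W i v)
            ≤ ∑ v ∈ I (k+1), W (k+1) v := le_trans e1 hf
        calc LPopt G w - (∑ i ∈ Finset.Icc 1 k, ∑ v ∈ I i, W i v + ∑ v ∈ I (k+1), W (k+1) v)
            ≤ (1-ρ) * (LPopt G w - ∑ i ∈ Finset.Icc 1 k, ∑ v ∈ I i, W i v) := by linarith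
          _ ≤ (1-ρ) * ((1-ρ)^k * LPopt G w) := e2
          _ = (1-ρ)^(k+1) * LPopt G w := by rw [pow_succ]; ring
  -- final assembly
  obtain ⟨hJind, -, hc⟩ := main T le_rfl
  have h1 : T + 1 - T = 1 := by omega
  rw [h1, hW1'] at hc
  obtain ⟨-, d2⟩ := decay T le_rfl
  have hpow : (1-ρ)^T ≤ ε := by
    have h1ρ : (0:ℝ) ≤ 1 - ρ := by linarith
    have he : 1 - ρ ≤ Real.exp (-ρ) := by
      have := Real.add_one_le_exp (-ρ); linarith
    have h2 : (1-ρ)^T ≤ Real.exp (-ρ)^T := pow_le_pow_left₀ h1ρ he T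
    rw [← Real.exp_nat_mul] at h2
    have hlog : Real.log (1/ε) ≤ ρ * T := by
      rw [div_le_iff₀ hρ0] at hT; linarith
    have h4 : (T:ℝ) * (-ρ) ≤ Real.log ε := by
      rw [one_div, Real.log_inv] at hlog; linarith
    calc (1-ρ)^T ≤ Real.exp ((T:ℝ) * -ρ) := h2
      _ ≤ Real.exp (Real.log ε) := Real.exp_le_exp.mpr h4
      _ = ε := Real.exp_log hε0
  have hS1 : 0 ≤ LPopt G w := LPopt_nonneg G w
  have hme : (1-ρ)^T * LPopt G w ≤ ε * LPopt G w :=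
    mul_le_mul_of_nonneg_right hpow hS1
  refine ⟨revG G I T T, hJind, ?_⟩
  linarith [hc, d2, hme]
end

section
/- Let G = (V,E) be a finite simple graph with strictly positive vertex weights w : V → ℝ>0. For each vertex v let W_v := Σ_{u∈N⁺(v)} w(u), where N⁺(v) = {v} ∪ N(v), and set x_v := w(v)/W_v. Then Σ_{{u,v}∈E} min{w(u), w(v)}·x_u·x_v ≤ (1/2)·Σ_{v∈V} w(v)·x_v; equivalently, Σ_{{u,v}∈E} min{w(u), w(v)}·w(u)·w(v)/(W_u·W_v) ≤ (1/2)·Σ_{v∈V} w(v)²/W_v. -/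
open Finset

/-- For the weighted Caro–Wei fractional solution
`x_v = w(v)/W_v` with `W_v = Σ_{u ∈ N⁺(v)} w(u)`, the edge cost is at most half
the utility. Edge sums count each unordered edge once (half the ordered
adjacency sum). -/
theorem caro_wei_fractional_cost_bound
    {V : Type*} [Fintype V] (G : SimpleGraph V) [DecidableRel G.Adj]
    (w : V → ℝ) (hw : ∀ v, 0 < w v) :
    (∑ u, ∑ v, if G.Adj u v then
        min (w u) (w v) * (w u / (w u + ∑ a ∈ G.neighborFinset u, w a)) *
          (w v / (w v + ∑ a ∈ G.neighborFinset v, w a))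
      else 0) / 2 ≤
    (1 / 2) * ∑ v, w v * (w v / (w v + ∑ a ∈ G.neighborFinset v, w a)) := by
  set W : V → ℝ := fun v => w v + ∑ a ∈ G.neighborFinset v, w a with hWdef
  have hWpos : ∀ v, 0 < W v := by
    intro v
    have h1 : (0:ℝ) ≤ ∑ a ∈ G.neighborFinset v, w a :=
      Finset.sum_nonneg fun a _ => (hw a).le
    have := hw v
    simp only [hWdef]
    linarith
  have key : (∑ u, ∑ v, if G.Adj u v then
      min (w u) (w v) * (w u / W u) * (w v / W v) else 0)
      ≤ ∑ v, w v * (w v / W v) := by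
    have step1 : (∑ u, ∑ v, if G.Adj u v then
        min (w u) (w v) * (w u / W u) * (w v / W v) else 0)
        ≤ ∑ u, ∑ v, ((if G.Adj u v then w v * (w u / W u)^2 else 0)
          + (if G.Adj u v then w u * (w v / W v)^2 else 0)) / 2 := by
      apply Finset.sum_le_sum; intro u _
      apply Finset.sum_le_sum; intro v _
      by_cases h : G.Adj u v
      · simp only [h, if_true]
        have hmu : min (w u) (w v) ≤ w u := min_le_left _ _
        have hmv : min (w u) (w v) ≤ w v := min_le_right _ _
        have hm : 0 < min (w u) (w v) := lt_min (hw u) (hw v)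
        have hA : 0 < w u / W u := div_pos (hw u) (hWpos u)
        have hB : 0 < w v / W v := div_pos (hw v) (hWpos v)
        nlinarith [sq_nonneg (w u / W u - w v / W v), sq_nonneg (w u / W u),
          sq_nonneg (w v / W v), mul_pos hA hB]
      · simp [h]
    have hsym : (∑ u, ∑ v, if G.Adj u v then w u * (w v / W v)^2 else 0)
        = ∑ u, ∑ v, if G.Adj u v then w v * (w u / W u)^2 else 0 := by
      rw [Finset.sum_comm]
      apply Finset.sum_congr rfl; intro u _
      apply Finset.sum_congr rfl; intro v _
      by_cases h : G.Adj u v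
      · simp [h, G.adj_symm h]
      · have h2 : ¬ G.Adj v u := fun hh => h (G.adj_symm hh)
        simp [h, h2]
    have step2 : (∑ u, ∑ v, if G.Adj u v then w v * (w u / W u)^2 else 0)
        ≤ ∑ v, w v * (w v / W v) := by
      apply Finset.sum_le_sum; intro u _
      have hrw : (∑ v, if G.Adj u v then w v * (w u / W u)^2 else 0)
          = (w u / W u)^2 * ∑ v ∈ G.neighborFinset u, w v := by
        rw [Finset.mul_sum, SimpleGraph.neighborFinset_eq_filter,
          Finset.sum_filter]
        apply Finset.sum_congr rfl; intro v _
        by_cases h : G.Adj u v <;> simp [h, mul_comm]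
      rw [hrw]
      have hN : (∑ v ∈ G.neighborFinset u, w v) ≤ W u := by
        simp only [hWdef]; linarith [hw u]
      have hWu := hWpos u
      have : (w u / W u)^2 * (∑ v ∈ G.neighborFinset u, w v)
          ≤ (w u / W u)^2 * W u :=
        mul_le_mul_of_nonneg_left hN (sq_nonneg _)
      calc (w u / W u)^2 * (∑ v ∈ G.neighborFinset u, w v)
          ≤ (w u / W u)^2 * W u := this
        _ = w u * (w u / W u) := by field_simp
    calc (∑ u, ∑ v, if G.Adj u v then
        min (w u) (w v) * (w u / W u) * (w v / W v) else 0)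
        ≤ ∑ u, ∑ v, ((if G.Adj u v then w v * (w u / W u)^2 else 0)
          + (if G.Adj u v then w u * (w v / W v)^2 else 0)) / 2 := step1
      _ = ((∑ u, ∑ v, if G.Adj u v then w v * (w u / W u)^2 else 0)
          + (∑ u, ∑ v, if G.Adj u v then w u * (w v / W v)^2 else 0)) / 2 := by
          simp only [← Finset.sum_div, Finset.sum_add_distrib]
      _ = ∑ u, ∑ v, if G.Adj u v then w v * (w u / W u)^2 else 0 := by
          rw [hsym]; ring
      _ ≤ ∑ v, w v * (w v / W v) := step2
  linarith [key]
end

section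
/- Every finite simple graph G = (V,E) with strictly positive vertex weights w : V → ℝ>0 contains an independent set I with Σ_{v∈I} w(v) ≥ (1/2)·Σ_{v∈V} w(v)² / w(N⁺(v)), where w(N⁺(v)) = Σ_{u∈N⁺(v)} w(u) and N⁺(v) = {v} ∪ N(v) is the closed neighborhood of v. -/
open Finset

private lemma aux_caro_wei {V : Type*} [Fintype V] [DecidableEq V] (G : SimpleGraph V)
    [DecidableRel G.Adj] (w : V → ℝ) (hw : ∀ v, 0 < w v) :
    ∀ S : Finset V, ∃ I : Finset V, I ⊆ S ∧ (∀ u ∈ I, ∀ v ∈ I, ¬ G.Adj u v) ∧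
      ∑ v ∈ S, (w v) ^ 2 / (w v + ∑ u ∈ G.neighborFinset v ∩ S, w u) ≤ ∑ v ∈ I, w v := by
  intro S
  induction S using Finset.strongInduction with
  | _ S ih =>
    rcases S.eq_empty_or_nonempty with rfl | hne
    · exact ⟨∅, by simp⟩
    have fpos : ∀ (T : Finset V) (u : V), 0 < w u + ∑ x ∈ G.neighborFinset u ∩ T, w x := by
      intro T u
      have h0 : (0:ℝ) ≤ ∑ x ∈ G.neighborFinset u ∩ T, w x :=
        Finset.sum_nonneg fun x _ => (hw x).le
      linarith [hw u]
    obtain ⟨v, hvS, hmax⟩ := S.exists_max_image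
      (fun u => w u / (w u + ∑ x ∈ G.neighborFinset u ∩ S, w x)) hne
    set N : Finset V := insert v (G.neighborFinset v) with hN
    set S' : Finset V := S \ N with hS'
    have hS'sub : S' ⊂ S := by
      refine (Finset.ssubset_iff_of_subset Finset.sdiff_subset).mpr ⟨v, hvS, ?_⟩
      simp [hS', hN]
    obtain ⟨I, hIsub, hind, hIbound⟩ := ih S' hS'sub
    have hmemS' : ∀ b ∈ I, b ≠ v ∧ b ∉ G.neighborFinset v := by
      intro b hb
      have := hIsub hb
      simp only [hS', hN, Finset.mem_sdiff, Finset.mem_insert] at this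
      exact ⟨fun h => this.2 (Or.inl h), fun h => this.2 (Or.inr h)⟩
    have hvI : v ∉ I := fun h => (hmemS' v h).1 rfl
    refine ⟨insert v I, ?_, ?_, ?_⟩
    · exact Finset.insert_subset hvS (hIsub.trans Finset.sdiff_subset)
    · intro a ha b hb
      rcases Finset.mem_insert.mp ha with ha' | ha <;>
        rcases Finset.mem_insert.mp hb with hb' | hb
      · rw [ha', hb']; exact fun h => G.loopless.irrefl _ h
      · rw [ha']; exact fun h => (hmemS' b hb).2 ((G.mem_neighborFinset _ _).mpr h)
      · rw [hb']; exact fun h => (hmemS' a ha).2 ((G.mem_neighborFinset _ _).mpr h.symm)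
      · exact hind a ha b hb
    · have hsplit :
          ∑ u ∈ S ∩ N, (w u) ^ 2 / (w u + ∑ x ∈ G.neighborFinset u ∩ S, w x)
            + ∑ u ∈ S', (w u) ^ 2 / (w u + ∑ x ∈ G.neighborFinset u ∩ S, w x)
          = ∑ u ∈ S, (w u) ^ 2 / (w u + ∑ x ∈ G.neighborFinset u ∩ S, w x) :=
        Finset.sum_inter_add_sum_sdiff S N _
      -- Part B: terms over S' only grow when shrinking the vertex set
      have hB : ∑ u ∈ S', (w u) ^ 2 / (w u + ∑ x ∈ G.neighborFinset u ∩ S, w x)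
          ≤ ∑ u ∈ S', (w u) ^ 2 / (w u + ∑ x ∈ G.neighborFinset u ∩ S', w x) := by
        refine Finset.sum_le_sum fun u hu => ?_
        have hden : w u + ∑ x ∈ G.neighborFinset u ∩ S', w x
            ≤ w u + ∑ x ∈ G.neighborFinset u ∩ S, w x := by
          have hsub : G.neighborFinset u ∩ S' ⊆ G.neighborFinset u ∩ S :=
            Finset.inter_subset_inter_left Finset.sdiff_subset
          have := Finset.sum_le_sum_of_subset_of_nonneg hsub (fun x _ _ => (hw x).le)
          linarith
        exact div_le_div_of_nonneg_left (by positivity) (fpos S' u) hden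
      -- Part A: the terms over the closed neighborhood sum to ≤ w v
      have hNwsum : ∑ u ∈ S ∩ N, w u = w v + ∑ x ∈ G.neighborFinset v ∩ S, w x := by
        have h1 : S ∩ N = insert v (G.neighborFinset v ∩ S) := by
          rw [Finset.inter_comm, hN, Finset.insert_inter_of_mem hvS]
        rw [h1, Finset.sum_insert (by simp)]
      have hA : ∑ u ∈ S ∩ N, (w u) ^ 2 / (w u + ∑ x ∈ G.neighborFinset u ∩ S, w x)
          ≤ w v := by
        have step : ∑ u ∈ S ∩ N, (w u) ^ 2 / (w u + ∑ x ∈ G.neighborFinset u ∩ S, w x)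
            ≤ ∑ u ∈ S ∩ N,
              w u * (w v / (w v + ∑ x ∈ G.neighborFinset v ∩ S, w x)) := by
          refine Finset.sum_le_sum fun u hu => ?_
          have huS : u ∈ S := (Finset.mem_inter.mp hu).1
          have hratio := hmax u huS
          have : (w u) ^ 2 / (w u + ∑ x ∈ G.neighborFinset u ∩ S, w x)
              = w u * (w u / (w u + ∑ x ∈ G.neighborFinset u ∩ S, w x)) := by
            rw [sq, mul_div_assoc]
          rw [this]
          exact mul_le_mul_of_nonneg_left hratio (hw u).le
        rw [← Finset.sum_mul, hNwsum] at step
        have hDv := fpos S v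
        calc ∑ u ∈ S ∩ N, (w u) ^ 2 / (w u + ∑ x ∈ G.neighborFinset u ∩ S, w x)
            ≤ (w v + ∑ x ∈ G.neighborFinset v ∩ S, w x)
              * (w v / (w v + ∑ x ∈ G.neighborFinset v ∩ S, w x)) := step
          _ = w v := by field_simp
      have hfinal : ∑ v ∈ insert v I, w v = w v + ∑ u ∈ I, w u :=
        Finset.sum_insert hvI
      rw [hfinal]
      linarith

/-- Weighted Caro–Wei within a factor 1/2: every finite simple graph
with strictly positive vertex weights contains an independent set of weight at
least `(1/2)·Σ_v w(v)²/w(N⁺(v))`. -/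
theorem exists_independent_set_half_caro_wei
    {V : Type*} [Fintype V] (G : SimpleGraph V) [DecidableRel G.Adj]
    (w : V → ℝ) (hw : ∀ v, 0 < w v) :
    ∃ I : Finset V, (∀ u ∈ I, ∀ v ∈ I, ¬ G.Adj u v) ∧
      ∑ v ∈ I, w v ≥
        (1 / 2) * ∑ v, (w v) ^ 2 / (w v + ∑ u ∈ G.neighborFinset v, w u) := by
  classical
  obtain ⟨I, -, hind, hbound⟩ := aux_caro_wei G w hw Finset.univ
  simp only [Finset.inter_univ] at hbound
  refine ⟨I, hind, ?_⟩
  have hnn : (0:ℝ) ≤ ∑ v, (w v) ^ 2 / (w v + ∑ u ∈ G.neighborFinset v, w u) := by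
    refine Finset.sum_nonneg fun v _ => ?_
    have h0 : (0:ℝ) ≤ ∑ u ∈ G.neighborFinset v, w u :=
      Finset.sum_nonneg fun u _ => (hw u).le
    have := hw v
    positivity
  linarith
end

section
/- Let G = (V,E) be a finite simple graph with vertex weights w : V → ℝ≥0 and let ε ∈ (0,1). For every x : V → ℝ≥0 satisfying Σ_{u∈N⁺(v)} x_u ≤ 1 for every vertex v (where N⁺(v) = {v} ∪ N(v)), there exists an independent set I of G with Σ_{v∈I} w(v) ≥ (1 − ε)·Σ_{v∈V} w(v)·x_v. -/
open Finset

lemma exists_independent_set_lp_exact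
    {V : Type*} [Fintype V] [DecidableEq V] (G : SimpleGraph V) [DecidableRel G.Adj]
    (w : V → ℝ) (hw : ∀ v, 0 ≤ w v)
    (x : V → ℝ) (hx0 : ∀ v, 0 ≤ x v)
    (hfeas : ∀ v, x v + ∑ u ∈ G.neighborFinset v, x u ≤ 1) :
    ∀ S : Finset V, ∃ I : Finset V, I ⊆ S ∧ (∀ u ∈ I, ∀ v ∈ I, ¬ G.Adj u v) ∧
      ∑ v ∈ I, w v ≥ ∑ v ∈ S, w v * x v := by
  intro S
  induction S using Finset.strongInduction with
  | _ S ih =>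
    rcases S.eq_empty_or_nonempty with rfl | hS
    · exact ⟨∅, by simp⟩
    · obtain ⟨v, hvS, hvmax⟩ := S.exists_max_image w hS
      set N : Finset V := insert v (G.neighborFinset v) with hN
      set T : Finset V := S \ N with hT
      have hTsub : T ⊂ S := by
        refine Finset.ssubset_iff_of_subset (Finset.sdiff_subset) |>.mpr ⟨v, hvS, ?_⟩
        simp [hT, hN]
      obtain ⟨I', hI'sub, hI'ind, hI'val⟩ := ih T hTsub
      have hvnotI' : v ∉ I' := fun h => by
        have := hI'sub h; simp [hT, hN] at this
      refine ⟨insert v I', ?_, ?_, ?_⟩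
      · intro u hu
        rcases Finset.mem_insert.mp hu with rfl | hu
        · exact hvS
        · exact (Finset.sdiff_subset (hI'sub hu))
      · intro a ha b hb
        have hnotadj : ∀ u ∈ I', ¬ G.Adj v u := by
          intro u hu hadj
          have := hI'sub hu
          simp [hT, hN] at this
          exact this.2.2 hadj
        rcases Finset.mem_insert.mp ha with ha' | ha <;>
          rcases Finset.mem_insert.mp hb with hb' | hb
        · simp [ha', hb']
        · simpa [ha'] using hnotadj b hb
        · exact fun h => hnotadj a ha (hb' ▸ h.symm)
        · exact hI'ind a ha b hb
      · rw [Finset.sum_insert hvnotI']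
        have hsplit : ∑ u ∈ S ∩ N, w u * x u + ∑ u ∈ S \ N, w u * x u
            = ∑ u ∈ S, w u * x u := Finset.sum_inter_add_sum_sdiff S N _
        have h1 : ∑ u ∈ S ∩ N, w u * x u ≤ w v := by
          calc ∑ u ∈ S ∩ N, w u * x u ≤ ∑ u ∈ S ∩ N, w v * x u := by
                refine Finset.sum_le_sum fun u hu => ?_
                exact mul_le_mul_of_nonneg_right
                  (hvmax u (Finset.mem_of_mem_inter_left hu)) (hx0 u)
            _ = w v * ∑ u ∈ S ∩ N, x u := by rw [Finset.mul_sum]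
            _ ≤ w v * ∑ u ∈ N, x u := by
                refine mul_le_mul_of_nonneg_left ?_ (hw v)
                exact Finset.sum_le_sum_of_subset_of_nonneg (Finset.inter_subset_right)
                  (fun i _ _ => hx0 i)
            _ ≤ w v * 1 := by
                refine mul_le_mul_of_nonneg_left ?_ (hw v)
                have hvn : v ∉ G.neighborFinset v := by simp
                rw [hN, Finset.sum_insert hvn]
                exact hfeas v
            _ = w v := mul_one _
        have := hI'val
        rw [← hsplit]
        linarith

/-- For every feasible solution `x` of the fractional independent set
LP with closed-neighborhood constraints and every `ε ∈ (0,1)`, there is an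
independent set of weight at least `(1 − ε)` times the LP objective of `x`. -/
theorem exists_independent_set_lp_rounding
    {V : Type*} [Fintype V] (G : SimpleGraph V) [DecidableRel G.Adj]
    (w : V → ℝ) (hw : ∀ v, 0 ≤ w v)
    (ε : ℝ) (hε0 : 0 < ε) (hε1 : ε < 1)
    (x : V → ℝ) (hx0 : ∀ v, 0 ≤ x v)
    (hfeas : ∀ v, x v + ∑ u ∈ G.neighborFinset v, x u ≤ 1) :
    ∃ I : Finset V, (∀ u ∈ I, ∀ v ∈ I, ¬ G.Adj u v) ∧
      ∑ v ∈ I, w v ≥ (1 - ε) * ∑ v, w v * x v := by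
  classical
  obtain ⟨I, _, hind, hval⟩ :=
    exists_independent_set_lp_exact G w hw x hx0 hfeas Finset.univ
  refine ⟨I, hind, ?_⟩
  have hLP : 0 ≤ ∑ v, w v * x v :=
    Finset.sum_nonneg fun v _ => mul_nonneg (hw v) (hx0 v)
  nlinarith
end
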